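/- arXiv:2105.12345 — 10 statements merged into one kernel-verified Lean document; each statement's English description precedes it below -/
import Mathlib

section
/- Let G be an additive abelian group and let f : G → ℝ be a real-valued positive definite function with f(0) = 1. Then for every q ≥ 1 and all y_1, …, y_q ∈ G, one has 1 − f(y_1 + ⋯ + y_q) ≤ ∑_{j=1}^q 2^j (1 − f(y_j)). -/
open scoped BigOperators

/-- A function `f : G → ℂ` on an additive abelian group is positive definite if every
quadratic form `∑ cᵢ c̄ⱼ f(yᵢ - yⱼ)` is a nonnegative real number. -/
def IsPositiveDefinite {G : Type*} [AddCommGroup G] (f : G → ℂ) : Prop :=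
  ∀ (n : ℕ) (y : Fin n → G) (c : Fin n → ℂ),
    ∃ t : ℝ, 0 ≤ t ∧ ∑ i, ∑ j, c i * (starRingEnd ℂ) (c j) * f (y i - y j) = (t : ℂ)

/-- A real-valued positive definite function is even. -/
lemma pd_even {G : Type*} [AddCommGroup G] (f : G → ℝ)
    (hpd : IsPositiveDefinite (fun g => (f g : ℂ))) (a : G) : f (-a) = f a := by
  obtain ⟨t, ht, h⟩ := hpd 2 ![0, a] ![1, Complex.I]
  simp [Fin.sum_univ_two, Complex.ext_iff] at h
  have := h.2
  linarith [this]

/-- A real-valued positive definite function with `f 0 = 1` is bounded above by `1`. -/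
lemma pd_le_one {G : Type*} [AddCommGroup G] (f : G → ℝ)
    (hpd : IsPositiveDefinite (fun g => (f g : ℂ))) (hf0 : f 0 = 1) (a : G) : f a ≤ 1 := by
  obtain ⟨t, ht, h⟩ := hpd 2 ![0, a] ![1, -1]
  simp [Fin.sum_univ_two, Complex.ext_iff, hf0] at h
  have he := pd_even f hpd a
  linarith

/-- The elementary inequality `1 - f(a+b) ≤ 2(1 - f a) + 2(1 - f b)`. -/
lemma pd_key {G : Type*} [AddCommGroup G] (f : G → ℝ)
    (hpd : IsPositiveDefinite (fun g => (f g : ℂ))) (hf0 : f 0 = 1) (a b : G) :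
    1 - f (a + b) ≤ 2 * (1 - f a) + 2 * (1 - f b) := by
  obtain ⟨t, ht, h⟩ := hpd 3 ![0, a, a + b] ![1, -2, 1]
  have he1 := pd_even f hpd a
  have he2 := pd_even f hpd b
  have he3 := pd_even f hpd (a + b)
  simp [Fin.sum_univ_three, Complex.ext_iff, hf0] at h
  have hb : (-b) + (-a) = -(a + b) := by abel
  rw [hb, he1, he2, he3] at h
  linarith

/-- Inequality (8) of the paper: for a real-valued positive definite function `f`
with `f(0) = 1`, one has `1 - f(y₁ + ⋯ + y_q) ≤ ∑_{j=1}^q 2^j (1 - f(yⱼ))`. -/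
theorem posdef_sum_inequality
    {G : Type*} [AddCommGroup G] (f : G → ℝ)
    (hpd : IsPositiveDefinite (fun g => (f g : ℂ))) (hf0 : f 0 = 1)
    (q : ℕ) (hq : 1 ≤ q) (y : Fin q → G) :
    1 - f (∑ j, y j) ≤ ∑ j : Fin q, (2 : ℝ) ^ ((j : ℕ) + 1) * (1 - f (y j)) := by
  clear hq
  induction q with
  | zero => simp [hf0]
  | succ n ih =>
    rw [Fin.sum_univ_succ, Fin.sum_univ_succ]
    have h1 := pd_key f hpd hf0 (y 0) (∑ i : Fin n, y i.succ)
    have h2 := ih (fun i => y i.succ)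
    calc 1 - f (y 0 + ∑ i : Fin n, y i.succ)
        ≤ 2 * (1 - f (y 0)) + 2 * (1 - f (∑ i : Fin n, y i.succ)) := h1
      _ ≤ 2 * (1 - f (y 0)) + 2 * ∑ j : Fin n, (2:ℝ) ^ ((j:ℕ)+1) * (1 - f (y j.succ)) := by
          linarith
      _ = (2:ℝ) ^ ((0:ℕ)+1) * (1 - f (y 0)) +
          ∑ i : Fin n, (2:ℝ) ^ (((i.succ : Fin (n+1)) : ℕ)+1) * (1 - f (y i.succ)) := by
          rw [Finset.mul_sum]
          congr 1
          · norm_num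
          · refine Finset.sum_congr rfl fun i _ => ?_
            have : ((i.succ : Fin (n+1)) : ℕ) = (i : ℕ) + 1 := rfl
            rw [this]
            ring
end

section
/- Let p be a prime number and let F = {i/p^n : i ∈ ℤ, n ∈ ℕ} be the additive subgroup of ℚ of rationals with p-power denominators. Let m be a power of p with m > 2. Let g : F → ℝ be a positive definite function with g(0) = 1, 0 ≤ g(r) ≤ 1 for all r ∈ F, g(1) > 0, and g(m·r) ≤ g(r)^m for all r ∈ F. Set C = −log g(1). Then for all natural numbers s and k and every integer i with 0 < i < m^k and i/m^k < 1/m^s, one has 1 − g(i/m^k) ≤ (C·2^{m+1}/(m − 2))·(1/m^s). Consequently, g is uniformly continuous on F with respect to the metric induced from ℝ. -/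
open scoped BigOperators

lemma aux_sym {G : Type*} [AddCommGroup G] (g : G → ℝ)
    (hpd : IsPositiveDefinite (fun r => (g r : ℂ))) (x : G) : g (-x) = g x := by
  obtain ⟨t, ht, heq⟩ := hpd 2 ![0, x] ![1, Complex.I]
  simp [Fin.sum_univ_two, Complex.ext_iff] at heq
  linarith [heq.2]

lemma aux_quad {G : Type*} [AddCommGroup G] (g : G → ℝ)
    (hpd : IsPositiveDefinite (fun r => (g r : ℂ))) (a b : G) (u v w : ℝ) :
    0 ≤ (u^2+v^2+w^2) * g 0 + 2*(g a*(u*v) + g b*(u*w) + g (b-a)*(v*w)) := by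
  obtain ⟨t, ht, heq⟩ := hpd 3 ![0, a, b] ![(u:ℂ), (v:ℂ), (w:ℂ)]
  have hsym : ∀ z : G, g (-z) = g z := aux_sym g hpd
  simp only [Fin.sum_univ_three, Matrix.cons_val_zero, Matrix.cons_val_one,
    Matrix.head_cons, Matrix.cons_val_two, Matrix.tail_cons, Complex.conj_ofReal,
    map_one, sub_zero, zero_sub, sub_self, one_mul, mul_one] at heq
  rw [hsym, hsym, show a - b = -(b-a) from (neg_sub b a).symm, hsym] at heq
  norm_cast at heq
  nlinarith [ht]

lemma aux_double {G : Type*} [AddCommGroup G] (g : G → ℝ)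
    (hpd : IsPositiveDefinite (fun r => (g r : ℂ))) (hg0 : g 0 = 1) (x y : G) :
    1 - g (x + y) ≤ 2*(1 - g x) + 2*(1 - g y) := by
  have q := aux_quad g hpd x (x+y) 1 (-(g x + g y)) 1
  rw [hg0, add_sub_cancel_left] at q
  nlinarith [sq_nonneg (g x + g y - 2)]

lemma aux_diff {G : Type*} [AddCommGroup G] (g : G → ℝ)
    (hpd : IsPositiveDefinite (fun r => (g r : ℂ))) (hg0 : g 0 = 1) (x y : G) :
    (g x - g y)^2 ≤ 2*(1 - g (y - x)) := by
  have q := aux_quad g hpd x y (-(g x - g y)) 1 (-1)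
  rw [hg0] at q
  nlinarith

set_option maxHeartbeats 1600000 in
/-- The continuity estimate (inequality (12)) in the proof of the main theorem: on the
group `F` of rationals with `p`-power denominators, a positive definite function `g` with
`g(0) = 1`, `0 ≤ g ≤ 1`, `g(1) > 0` and `g(m r) ≤ g(r)^m` (for a power `m > 2` of `p`)
satisfies `1 - g(i/mᵏ) ≤ (C 2^{m+1}/(m-2)) (1/mˢ)` whenever `0 < i < mᵏ` and
`i/mᵏ < 1/mˢ`; consequently `g` is uniformly continuous in the metric of `ℝ`. -/
theorem posdef_continuity_estimate
    (p : ℕ) (hp : p.Prime)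
    (F : AddSubgroup ℚ)
    (hF : ∀ x : ℚ, x ∈ F ↔ ∃ (i : ℤ) (n : ℕ), x = (i : ℚ) / (p : ℚ) ^ n)
    (m t : ℕ) (hmp : m = p ^ t) (hm2 : 2 < m)
    (g : F → ℝ)
    (hpd : IsPositiveDefinite (fun r => (g r : ℂ))) (hg0 : g 0 = 1)
    (hrange : ∀ r : F, 0 ≤ g r ∧ g r ≤ 1)
    (h1F : (1 : ℚ) ∈ F) (hg1 : 0 < g ⟨1, h1F⟩)
    (hgm : ∀ r : F, g (m • r) ≤ (g r) ^ m)
    (C : ℝ) (hC : C = -Real.log (g ⟨1, h1F⟩))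
    (hmem : ∀ (i : ℤ) (k : ℕ), ((i : ℚ) / (m : ℚ) ^ k) ∈ F) :
    (∀ (s k : ℕ) (i : ℤ), 0 < i → (i : ℚ) < (m : ℚ) ^ k →
        (i : ℚ) / (m : ℚ) ^ k < 1 / (m : ℚ) ^ s →
        1 - g ⟨(i : ℚ) / (m : ℚ) ^ k, hmem i k⟩ ≤
          C * 2 ^ (m + 1) / (m - 2) * (1 / (m : ℝ) ^ s)) ∧
      UniformContinuous g := by
  have hsym := aux_sym g hpd
  have hdouble := aux_double g hpd hg0
  have hdiff := aux_diff g hpd hg0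
  have hmQ : (0:ℚ) < m := by exact_mod_cast (by omega : 0 < m)
  have hMR : (3:ℝ) ≤ (m:ℝ) := by exact_mod_cast (by omega : 3 ≤ m)
  have hC0 : 0 ≤ C := by
    rw [hC, neg_nonneg]
    exact Real.log_nonpos (hrange _).1 (hrange _).2
  set X : ℕ → ℕ → F := fun i k => ⟨((i:ℤ):ℚ)/(m:ℚ)^k, hmem i k⟩ with hX
  -- iterated multiplicativity
  have claim1 : ∀ n : ℕ, g ⟨1, h1F⟩ ≤ g (X 1 n) ^ (m^n) := by
    intro n
    induction n with
    | zero =>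
      have h : X 1 0 = ⟨1, h1F⟩ := Subtype.ext (by show (((1:ℕ):ℤ):ℚ)/(m:ℚ)^0 = 1; push_cast; norm_num)
      rw [h]; simp
    | succ n ih =>
      have hstep : m • (X 1 (n+1)) = X 1 n := by
        apply Subtype.ext
        push_cast
        rw [nsmul_eq_mul]; show (m:ℚ) * ((((1:ℕ):ℤ):ℚ)/(m:ℚ)^(n+1)) = (((1:ℕ):ℤ):ℚ)/(m:ℚ)^n; rw [pow_succ]
        field_simp
      have h2 := hgm (X 1 (n+1))
      rw [hstep] at h2
      calc g ⟨1, h1F⟩ ≤ g (X 1 n) ^ m^n := ih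
        _ ≤ (g (X 1 (n+1)) ^ m) ^ m^n := pow_le_pow_left₀ (hrange _).1 h2 _
        _ = g (X 1 (n+1)) ^ m^(n+1) := by
            rw [← pow_mul]; congr 1; rw [pow_succ]; ring
  have posn : ∀ n : ℕ, 0 < g (X 1 n) := by
    intro n
    rcases ((hrange (X 1 n)).1).lt_or_eq with h | h
    · exact h
    · exfalso
      have := claim1 n
      rw [← h, zero_pow (by positivity : m^n ≠ 0)] at this
      linarith
  have base : ∀ n : ℕ, 1 - g (X 1 n) ≤ C / (m:ℝ)^n := by
    intro n
    have hlog : Real.log (g ⟨1, h1F⟩) ≤ ((m:ℝ)^n) * Real.log (g (X 1 n)) := by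
      have := Real.log_le_log hg1 (claim1 n)
      rw [Real.log_pow] at this
      exact_mod_cast this
    have h1u : 1 - g (X 1 n) ≤ -Real.log (g (X 1 n)) := by
      have := Real.log_le_sub_one_of_pos (posn n)
      linarith
    have h2u : -Real.log (g (X 1 n)) ≤ C / (m:ℝ)^n := by
      rw [hC, le_div_iff₀ (by positivity)]
      nlinarith [hlog]
    linarith
  have digit : ∀ (a n : ℕ), 0 < a → a ≤ m → 1 - g (X a n) ≤ ((2:ℝ)^(a+1) - 2) * C / (m:ℝ)^n := by
    intro a
    induction a with
    | zero => intro n h; omega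
    | succ a ih =>
      intro n _ ham
      rcases Nat.eq_zero_or_pos a with ha0 | hapos
      · subst ha0
        have hb := base n
        have hcn : 0 ≤ C / (m:ℝ)^n := by positivity
        calc 1 - g (X 1 n) ≤ C / (m:ℝ)^n := hb
          _ ≤ ((2:ℝ)^(1+1) - 2) * C / (m:ℝ)^n := by
              rw [show ((2:ℝ)^(1+1) - 2) = 2 by norm_num]
              rw [mul_div_assoc]; linarith
      · have hsplit : X (a+1) n = X a n + X 1 n := by
          apply Subtype.ext
          show (((a+1:ℕ):ℤ):ℚ)/(m:ℚ)^n = (((a:ℕ):ℤ):ℚ)/(m:ℚ)^n + (((1:ℕ):ℤ):ℚ)/(m:ℚ)^n; push_cast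
          ring
        have hd := hdouble (X a n) (X 1 n)
        rw [← hsplit] at hd
        have hia := ih n hapos (by omega)
        have hb := base n
        have key : 2*(((2:ℝ)^(a+1) - 2) * C / (m:ℝ)^n) + 2*(C / (m:ℝ)^n)
            = ((2:ℝ)^(a+1+1) - 2) * C / (m:ℝ)^n := by
          rw [pow_succ]
          field_simp
          ring
        linarith
  -- the key induction on the number of digits
  have key : ∀ (L k i : ℕ), 0 < i → i < m^L → L ≤ k →
      1 - g (X i k) ≤ 2^(m+1) * C / (((m:ℝ)-2) * (m:ℝ)^(k-L)) := by
    intro L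
    induction L with
    | zero =>
      intro k i hi hiL _
      rw [pow_zero] at hiL; omega
    | succ L ih =>
      intro k i hi hiL hLk
      have hm0 : 0 < m := by omega
      have hmL : 0 < m^L := pow_pos hm0 L
      set a := i / m^L with hadef
      set r := i % m^L with hrdef
      have ham : a < m := by
        rw [hadef, Nat.div_lt_iff_lt_mul hmL]
        calc i < m^(L+1) := hiL
          _ = m * m^L := by rw [pow_succ]; ring
      have hir : i = a * m^L + r := by
        rw [hadef, hrdef, mul_comm]
        exact (Nat.div_add_mod i (m^L)).symm
      have hrL : r < m^L := Nat.mod_lt _ hmL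
      -- common denominator facts
      have hkl1 : L + 1 ≤ k := hLk
      have hMe1 : (m:ℝ)^(k-L) = (m:ℝ)^(k-(L+1)) * (m:ℝ) := by
        rw [← pow_succ]; congr 1; omega
      have hnum0 : (0:ℝ) ≤ 2^(m+1) * C := by positivity
      have hM2 : (0:ℝ) < (m:ℝ) - 2 := by linarith
      rcases Nat.eq_zero_or_pos a with ha0 | hapos
      · -- leading digit zero: i = r < m^L
        have hri : i < m^L := by
          have : i = r := by rw [hir, ha0]; simp
          omega
        have h := ih k i hi hri (by omega)
        refine h.trans ?_
        gcongr
        · exact_mod_cast (by omega : 1 ≤ m)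
        · omega
      · have hxval : ((i:ℤ):ℚ)/(m:ℚ)^k = ((a:ℤ):ℚ)/(m:ℚ)^(k-L) + ((r:ℤ):ℚ)/(m:ℚ)^k := by
          have hmkk : (m:ℚ)^k = (m:ℚ)^(k-L) * (m:ℚ)^L := by
            rw [← pow_add]; congr 1; omega
          have hic : (i:ℚ) = (a:ℚ)*(m:ℚ)^L + (r:ℚ) := by exact_mod_cast hir
          push_cast
          rw [hic, hmkk]
          have h1 : (m:ℚ)^(k-L) ≠ 0 := by positivity
          have h2 : (m:ℚ)^L ≠ 0 := by positivity
          field_simp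
        have hpow2 : (2:ℝ)^(a+1) ≤ 2^m := by
          apply pow_le_pow_right₀ (by norm_num)
          omega
        rcases Nat.eq_zero_or_pos r with hr0 | hrpos
        · -- single digit
          have hXa : X i k = X a (k-L) := by
            apply Subtype.ext
            show ((i:ℤ):ℚ)/(m:ℚ)^k = ((a:ℤ):ℚ)/(m:ℚ)^(k-L)
            rw [hxval, hr0]; push_cast; ring
          rw [hXa]
          refine (digit a (k-L) hapos (by omega)).trans ?_
          rw [hMe1]
          set D := (m:ℝ)^(k-(L+1)) with hD
          have hDpos : (0:ℝ) < D := by positivity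
          have e1 : ((2:ℝ)^(a+1) - 2) * C / (D*(m:ℝ))
              = (((2:ℝ)^(a+1)-2)*((m:ℝ)-2)) * (C/(((m:ℝ)-2)*D*(m:ℝ))) := by
            field_simp
          have e2 : (2:ℝ)^(m+1) * C / (((m:ℝ)-2) * D)
              = ((2:ℝ)^(m+1)*(m:ℝ)) * (C/(((m:ℝ)-2)*D*(m:ℝ))) := by
            field_simp
          rw [e1, e2]
          apply mul_le_mul_of_nonneg_right _ (by positivity)
          have h21 : (2:ℝ)^(m+1) = 2 * 2^m := by rw [pow_succ]; ring
          nlinarith [h21, mul_le_mul_of_nonneg_right hpow2 (by linarith : (0:ℝ) ≤ (m:ℝ) - 2),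
            pow_nonneg (by norm_num : (0:ℝ) ≤ 2) m,
            pow_pos (by norm_num : (0:ℝ) < 2) (a+1)]
        · have hXa : X i k = X a (k-L) + X r k := by
            apply Subtype.ext
            show ((i:ℤ):ℚ)/(m:ℚ)^k = ((a:ℤ):ℚ)/(m:ℚ)^(k-L) + ((r:ℤ):ℚ)/(m:ℚ)^k
            exact hxval
          have hd := hdouble (X a (k-L)) (X r k)
          rw [← hXa] at hd
          have h1 := digit a (k-L) hapos (by omega)
          have h2 := ih k r hrpos hrL (by omega)
          have harith : 2*(((2:ℝ)^(a+1) - 2) * C / (m:ℝ)^(k-L))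
              + 2*(2^(m+1) * C / (((m:ℝ)-2) * (m:ℝ)^(k-L)))
              ≤ 2^(m+1) * C / (((m:ℝ)-2) * (m:ℝ)^(k-(L+1))) := by
            rw [hMe1]
            set D := (m:ℝ)^(k-(L+1)) with hD
            have hDpos : (0:ℝ) < D := by positivity
            have e1 : 2*(((2:ℝ)^(a+1) - 2) * C / (D * (m:ℝ)))
                + 2*(2^(m+1) * C / (((m:ℝ)-2) * (D * (m:ℝ))))
                = (2*((2:ℝ)^(a+1) - 2)*((m:ℝ)-2) + 2*2^(m+1)) * (C/(((m:ℝ)-2)*D*(m:ℝ))) := by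
              field_simp
            have e2 : 2^(m+1) * C / (((m:ℝ)-2) * D)
                = (2^(m+1)*(m:ℝ)) * (C/(((m:ℝ)-2)*D*(m:ℝ))) := by
              field_simp
            rw [e1, e2]
            apply mul_le_mul_of_nonneg_right _ (by positivity)
            have h21 : (2:ℝ)^(m+1) = 2 * 2^m := by rw [pow_succ]; ring
            nlinarith [h21, mul_le_mul_of_nonneg_right hpow2 (by linarith : (0:ℝ) ≤ (m:ℝ) - 2),
              pow_nonneg (by norm_num : (0:ℝ) ≤ 2) m,
              pow_pos (by norm_num : (0:ℝ) < 2) (a+1)]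
          linarith
  -- Part 1: the quantitative estimate
  have main : ∀ (s k : ℕ) (i : ℤ), 0 < i → (i : ℚ) < (m : ℚ) ^ k →
      (i : ℚ) / (m : ℚ) ^ k < 1 / (m : ℚ) ^ s →
      1 - g ⟨(i : ℚ) / (m : ℚ) ^ k, hmem i k⟩ ≤
        C * 2 ^ (m + 1) / ((m:ℝ) - 2) * (1 / (m : ℝ) ^ s) := by
    intro s k i hi hik hiks
    set iN := i.toNat with hiNdef
    have hiNi : (iN:ℤ) = i := Int.toNat_of_nonneg hi.le
    have hiQ : ((iN:ℕ):ℚ) = (i:ℚ) := by exact_mod_cast hiNi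
    have hmul : (i:ℚ) * (m:ℚ)^s < (m:ℚ)^k := by
      have h' := (div_lt_div_iff₀ (by positivity) (by positivity)).mp hiks
      linarith [h']
    have hms : iN * m^s < m^k := by
      have h' : ((iN:ℕ):ℚ) * (m:ℚ)^s < (m:ℚ)^k := by rw [hiQ]; exact hmul
      exact_mod_cast h'
    have hiNpos : 0 < iN := by omega
    have hsk : s ≤ k := by
      by_contra hcon
      push_neg at hcon
      have h1 : m^k ≤ m^s := Nat.pow_le_pow_right (by omega) (by omega)
      have h2 : 1 * m^s ≤ iN * m^s := Nat.mul_le_mul_right _ (by omega)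
      rw [one_mul] at h2
      omega
    have hlt : iN < m^(k - s) := by
      have hsplit : m^k = m^(k-s) * m^s := by rw [← pow_add]; congr 1; omega
      rw [hsplit] at hms
      exact Nat.lt_of_mul_lt_mul_right hms
    have h := key (k-s) k iN hiNpos hlt (by omega)
    have hXeq : X iN k = ⟨(i : ℚ) / (m : ℚ) ^ k, hmem i k⟩ := by
      apply Subtype.ext
      show ((iN:ℤ):ℚ)/(m:ℚ)^k = (i:ℚ)/(m:ℚ)^k
      rw [hiNi]
    rw [hXeq] at h
    have hexp : k - (k - s) = s := by omega
    rw [hexp] at h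
    refine h.trans_eq ?_
    have hne1 : ((m:ℝ) - 2) ≠ 0 := by linarith
    have hne2 : ((m:ℝ))^s ≠ 0 := by positivity
    field_simp
  refine ⟨main, ?_⟩
  -- Part 2: uniform continuity
  rw [Metric.uniformContinuous_iff]
  intro ε hε
  set K := C * 2^(m+1) / ((m:ℝ)-2) with hK
  have hM2 : (0:ℝ) < (m:ℝ) - 2 := by linarith
  have hKnn : 0 ≤ K := div_nonneg (by positivity) hM2.le
  obtain ⟨s, hs⟩ := exists_pow_lt_of_lt_one
    (show (0:ℝ) < ε^2/2/(K+1) by positivity)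
    (show (1:ℝ)/(m:ℝ) < 1 by rw [div_lt_one (by linarith)]; linarith)
  have hKs : K * (1/(m:ℝ)^s) < ε^2/2 := by
    have h1 : (1/(m:ℝ))^s = 1/(m:ℝ)^s := by rw [div_pow, one_pow]
    rw [← h1]
    calc K * (1/(m:ℝ))^s ≤ (K+1) * (1/(m:ℝ))^s := by
          apply mul_le_mul_of_nonneg_right (by linarith) (by positivity)
      _ < (K+1) * (ε^2/2/(K+1)) := by
          apply mul_lt_mul_of_pos_left hs (by linarith)
      _ = ε^2/2 := by field_simp
  refine ⟨1/(m:ℝ)^s, by positivity, ?_⟩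
  intro x y hxy
  rw [Real.dist_eq]
  have hdq : dist (x:ℚ) (y:ℚ) < 1/(m:ℝ)^s := by rwa [Subtype.dist_eq] at hxy
  have habs : |((x:ℚ):ℝ) - ((y:ℚ):ℝ)| < 1/(m:ℝ)^s := by
    rw [show |((x:ℚ):ℝ) - ((y:ℚ):ℝ)| = dist (x:ℚ) (y:ℚ) from rfl]
    exact hdq
  rw [abs_lt] at habs
  have claim : ∀ d : F, 0 < (d:ℚ) → ((d:ℚ):ℝ) < 1/(m:ℝ)^s → 1 - g d < ε^2/2 := by
    intro d hd hds
    obtain ⟨j, n, hjn⟩ := (hF (d:ℚ)).mp d.2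
    have hp0 : (0:ℚ) < (p:ℚ) := by exact_mod_cast hp.pos
    have hj : 0 < j := by
      by_contra hcon
      push_neg at hcon
      have hj0 : ((j:ℚ)) ≤ 0 := by exact_mod_cast hcon
      have : (d:ℚ) ≤ 0 := by
        rw [hjn]
        apply div_nonpos_of_nonpos_of_nonneg hj0 (by positivity)
      linarith
    have ht1 : 1 ≤ t := by
      rcases Nat.eq_zero_or_pos t with h | h
      · rw [h, pow_zero] at hmp; omega
      · exact h
    have hnt : n ≤ t * n := Nat.le_mul_of_pos_left n (by omega)
    set i : ℤ := j * (p:ℤ)^(t*n - n) with hidef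
    have hipos : 0 < i := mul_pos hj (pow_pos (by exact_mod_cast hp.pos) _)
    have hval : (d:ℚ) = (i:ℚ)/(m:ℚ)^n := by
      rw [hidef, hjn, hmp]
      have hsplit : ((p:ℚ)^t)^n = (p:ℚ)^(t*n-n) * (p:ℚ)^n := by
        rw [← pow_mul, ← pow_add]
        congr 1
        omega
      push_cast
      rw [hsplit]
      have hpne : (p:ℚ) ≠ 0 := ne_of_gt hp0
      field_simp
    have hdlt : (d:ℚ) < 1/(m:ℚ)^s := by
      have hcast : ((1/(m:ℚ)^s : ℚ):ℝ) = 1/(m:ℝ)^s := by push_cast; ring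
      rw [show ((d:ℚ) < 1/(m:ℚ)^s) ↔ (((d:ℚ)):ℝ) < ((1/(m:ℚ)^s : ℚ):ℝ) from (Rat.cast_lt (K := ℝ)).symm]
      rw [hcast]
      exact hds
    have hms1 : (1:ℚ) ≤ (m:ℚ)^s := by
      have h1 : (1:ℚ) ≤ (m:ℚ) := by exact_mod_cast (by omega : 1 ≤ m)
      calc (1:ℚ) = 1^s := (one_pow s).symm
        _ ≤ (m:ℚ)^s := pow_le_pow_left₀ (by norm_num) h1 s
    have hd1 : (d:ℚ) < 1 := lt_of_lt_of_le hdlt (by rw [div_le_one (by positivity)]; exact hms1)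
    have hilt : (i:ℚ) < (m:ℚ)^n := by
      rw [hval] at hd1
      exact (div_lt_one (by positivity)).mp hd1
    have hiks : (i:ℚ)/(m:ℚ)^n < 1/(m:ℚ)^s := hval ▸ hdlt
    have h := main s n i hipos hilt hiks
    have hdX : d = ⟨(i:ℚ)/(m:ℚ)^n, hmem i n⟩ := Subtype.ext hval
    rw [← hdX] at h
    calc 1 - g d ≤ K * (1/(m:ℝ)^s) := h
      _ < ε^2/2 := hKs
  rcases lt_trichotomy ((x - y : F) : ℚ) 0 with h | h | h
  · have hsubval : ((y - x : F):ℚ) = (y:ℚ) - (x:ℚ) := by push_cast; ring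
    have hsubval' : ((x - y : F):ℚ) = (x:ℚ) - (y:ℚ) := by push_cast; ring
    have hdpos : 0 < ((y - x : F):ℚ) := by rw [hsubval]; rw [hsubval'] at h; linarith
    have hdlt : (((y - x : F):ℚ):ℝ) < 1/(m:ℝ)^s := by
      rw [hsubval]
      push_cast
      linarith [habs.1]
    have hcl := claim _ hdpos hdlt
    have hq := hdiff x y
    rw [abs_lt]
    constructor <;> nlinarith [hq, hcl, hε]
  · have hxyeq : x = y := by
      apply Subtype.ext
      have hsubval' : ((x - y : F):ℚ) = (x:ℚ) - (y:ℚ) := by push_cast; ring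
      rw [hsubval'] at h
      linarith
    rw [hxyeq]
    simpa using hε
  · have hsubval' : ((x - y : F):ℚ) = (x:ℚ) - (y:ℚ) := by push_cast; ring
    have hdpos : 0 < ((x - y : F):ℚ) := h
    have hdlt : (((x - y : F):ℚ):ℝ) < 1/(m:ℝ)^s := by
      rw [hsubval']
      push_cast
      linarith [habs.2]
    have hcl := claim _ hdpos hdlt
    have hq := hdiff y x
    rw [abs_lt]
    constructor <;> nlinarith [hq, hcl, hε]
end

section
/- Let p be a prime number and let E be a nontrivial additive subgroup of ℚ such that for every y ∈ ℚ, if p·y ∈ E then y ∈ E. Then there exists a sequence b = (b_0, b_1, b_2, …) of integers with b_j > 1 for all j such that E is isomorphic as an abstract abelian group to H_b. -/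
open scoped BigOperators

/-- For a sequence `b` of integers `> 1`, `Hgrp b hb` is the additive subgroup of `ℚ`
consisting of all rationals of the form `m / (b 0 * b 1 * ⋯ * b n)` with `m ∈ ℤ`, `n ∈ ℕ`. -/
def Hgrp (b : ℕ → ℤ) (hb : ∀ j, 1 < b j) : AddSubgroup ℚ where
  carrier := {x : ℚ | ∃ (m : ℤ) (n : ℕ),
    x = (m : ℚ) / ∏ j ∈ Finset.range (n + 1), (b j : ℚ)}
  zero_mem' := ⟨0, 0, by simp⟩
  neg_mem' := by
    rintro x ⟨m, n, rfl⟩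
    exact ⟨-m, n, by push_cast; ring⟩
  add_mem' := by
    have hne : ∀ s : Finset ℕ, (∏ j ∈ s, (b j : ℚ)) ≠ 0 := by
      intro s
      refine Finset.prod_ne_zero_iff.mpr fun j _ => ?_
      have := hb j
      exact_mod_cast (by omega : b j ≠ 0)
    have key : ∀ (m m' : ℤ) (n k : ℕ), n ≤ k →
        ((m : ℚ) / ∏ j ∈ Finset.range (n + 1), (b j : ℚ)) +
          ((m' : ℚ) / ∏ j ∈ Finset.range (k + 1), (b j : ℚ)) ∈
        {x : ℚ | ∃ (m : ℤ) (n : ℕ),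
          x = (m : ℚ) / ∏ j ∈ Finset.range (n + 1), (b j : ℚ)} := by
      intro m m' n k hnk
      refine ⟨m * ∏ j ∈ Finset.Ico (n + 1) (k + 1), b j + m', k, ?_⟩
      have hsplit : (∏ j ∈ Finset.range (k + 1), (b j : ℚ)) =
          (∏ j ∈ Finset.range (n + 1), (b j : ℚ)) *
            ∏ j ∈ Finset.Ico (n + 1) (k + 1), (b j : ℚ) := by
        simp only [Finset.range_eq_Ico]
        exact (Finset.prod_Ico_consecutive (fun j => (b j : ℚ))
          (Nat.zero_le (n + 1)) (by omega)).symm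
      have h1 := hne (Finset.range (n + 1))
      have h2 := hne (Finset.Ico (n + 1) (k + 1))
      rw [hsplit]
      push_cast
      field_simp
    rintro x y ⟨m, n, rfl⟩ ⟨m', k, rfl⟩
    rcases le_total n k with h | h
    · exact key m m' n k h
    · have := key m' m k n h
      rwa [add_comm] at this

/-- A subgroup of `ℚ` containing an element contains the inverse of its denominator. -/
lemma aux_inv_den (E : AddSubgroup ℚ) (h1 : (1 : ℚ) ∈ E) {x : ℚ} (hx : x ∈ E) :
    (1 : ℚ) / (x.den : ℚ) ∈ E := by
  have hred : Int.gcd x.num (x.den : ℤ) = 1 := x.reduced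
  have hbez := Int.gcd_eq_gcd_ab x.num (x.den : ℤ)
  rw [hred] at hbez
  set A := Int.gcdA x.num (x.den : ℤ)
  set B := Int.gcdB x.num (x.den : ℤ)
  have hd0 : (x.den : ℚ) ≠ 0 := by exact_mod_cast x.den_ne_zero
  have hxd : x * (x.den : ℚ) = (x.num : ℚ) := (eq_div_iff hd0).mp (Rat.num_div_den x).symm
  have hb' : (1 : ℚ) = (x.num : ℚ) * A + (x.den : ℚ) * B := by exact_mod_cast hbez
  have hkey : ((A : ℚ) * x + B) * (x.den : ℚ) = 1 := by
    linear_combination (A : ℚ) * hxd - hb'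
  have heq : (1 : ℚ) / (x.den : ℚ) = A • x + B • (1 : ℚ) := by
    rw [zsmul_eq_mul, zsmul_eq_mul, mul_one, eq_comm, eq_div_iff hd0]
    exact hkey
  rw [heq]
  exact AddSubgroup.add_mem _ (AddSubgroup.zsmul_mem _ hx A) (AddSubgroup.zsmul_mem _ h1 B)

lemma aux_inv_lcm (E : AddSubgroup ℚ) {a b : ℕ} (ha : 0 < a) (hb : 0 < b)
    (hha : (1 : ℚ) / (a : ℚ) ∈ E) (hhb : (1 : ℚ) / (b : ℚ) ∈ E) :
    (1 : ℚ) / (Nat.lcm a b : ℚ) ∈ E := by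
  have hbez := Int.gcd_eq_gcd_ab (a : ℤ) (b : ℤ)
  set A := Int.gcdA (a : ℤ) (b : ℤ)
  set B := Int.gcdB (a : ℤ) (b : ℤ)
  have hgl : Nat.gcd a b * Nat.lcm a b = a * b := Nat.gcd_mul_lcm a b
  have ha0 : (a : ℚ) ≠ 0 := by exact_mod_cast ha.ne'
  have hb0 : (b : ℚ) ≠ 0 := by exact_mod_cast hb.ne'
  have hl0 : (Nat.lcm a b : ℚ) ≠ 0 := by
    have : 0 < Nat.lcm a b := Nat.pos_of_ne_zero (Nat.lcm_ne_zero ha.ne' hb.ne')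
    exact_mod_cast this.ne'
  have heq : (1 : ℚ) / (Nat.lcm a b : ℚ) = A • ((1 : ℚ) / (b : ℚ)) + B • ((1 : ℚ) / (a : ℚ)) := by
    rw [zsmul_eq_mul, zsmul_eq_mul]
    have hgcd : ((Int.gcd (a : ℤ) (b : ℤ) : ℤ) : ℚ) = (A : ℚ) * a + (B : ℚ) * b := by
      push_cast [hbez]; ring
    have hgcd' : ((Nat.gcd a b : ℕ) : ℚ) = (A : ℚ) * a + (B : ℚ) * b := by
      rw [← hgcd]; norm_cast
    have hgl' : ((Nat.gcd a b : ℕ) : ℚ) * (Nat.lcm a b : ℚ) = (a : ℚ) * b := by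
      exact_mod_cast congrArg (fun n : ℕ => (n : ℚ)) hgl
    field_simp
    linear_combination (Nat.lcm a b : ℚ) * hgcd' - hgl'
  rw [heq]
  exact AddSubgroup.add_mem _ (AddSubgroup.zsmul_mem _ hhb A) (AddSubgroup.zsmul_mem _ hha B)

lemma aux_key (p : ℕ) (hp : p.Prime) (E : AddSubgroup ℚ) (h1 : (1 : ℚ) ∈ E)
    (hdiv : ∀ y : ℚ, (p : ℚ) * y ∈ E → y ∈ E) :
    ∃ (b : ℕ → ℤ) (hb : ∀ j, 1 < b j), Hgrp b hb = E := by
  classical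
  have hp2 : 2 ≤ p := hp.two_le
  have hp0 : (p : ℚ) ≠ 0 := by exact_mod_cast (by omega : p ≠ 0)
  -- closure under multiplying denominator by p
  have hmulp : ∀ m : ℕ, 0 < m → (1 : ℚ) / (m : ℚ) ∈ E → (1 : ℚ) / ((m * p : ℕ) : ℚ) ∈ E := by
    intro m hm hmem
    apply hdiv
    have hm0 : (m : ℚ) ≠ 0 := by exact_mod_cast hm.ne'
    have hp0' : (p : ℚ) ≠ 0 := by exact_mod_cast (by omega : p ≠ 0)
    have : (p : ℚ) * ((1 : ℚ) / ((m * p : ℕ) : ℚ)) = (1 : ℚ) / (m : ℚ) := by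
      push_cast; field_simp
    rw [this]; exact hmem
  -- enumeration of "good" denominators
  set s : ℕ → ℕ := fun n => if 0 < n ∧ (1 : ℚ) / (n : ℚ) ∈ E then n else 1 with hs_def
  have hs : ∀ n, 0 < s n ∧ (1 : ℚ) / (s n : ℚ) ∈ E := by
    intro n
    have hsn : s n = if 0 < n ∧ (1 : ℚ) / (n : ℚ) ∈ E then n else 1 := rfl
    rw [hsn]
    split_ifs with h
    · exact h
    · exact ⟨one_pos, by simpa using h1⟩
  -- recursive denominators
  set B : ℕ → ℕ := fun n => Nat.rec 1 (fun k Bk => Nat.lcm Bk (s k) * p) n with hB_def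
  have hB0 : B 0 = 1 := rfl
  have hBsucc : ∀ n, B (n + 1) = Nat.lcm (B n) (s n) * p := fun n => rfl
  have hBpos : ∀ n, 0 < B n := by
    intro n
    induction n with
    | zero => simp [hB0]
    | succ k ih =>
      rw [hBsucc]
      have := (hs k).1
      have hl : 0 < Nat.lcm (B k) (s k) :=
        Nat.pos_of_ne_zero (Nat.lcm_ne_zero ih.ne' this.ne')
      exact Nat.mul_pos hl (by omega)
  have hBmem : ∀ n, (1 : ℚ) / (B n : ℚ) ∈ E := by
    intro n
    induction n with
    | zero => simpa [hB0] using h1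
    | succ k ih =>
      rw [hBsucc]
      exact hmulp _ (Nat.pos_of_ne_zero (Nat.lcm_ne_zero (hBpos k).ne' (hs k).1.ne'))
        (aux_inv_lcm E (hBpos k) (hs k).1 ih (hs k).2)
  have hBdvd : ∀ n, B n ∣ B (n + 1) := by
    intro n; rw [hBsucc]
    exact Dvd.dvd.mul_right (Nat.dvd_lcm_left _ _) p
  have hsdvd : ∀ n, s n ∣ B (n + 1) := by
    intro n; rw [hBsucc]
    exact Dvd.dvd.mul_right (Nat.dvd_lcm_right _ _) p
  have hBgrow : ∀ n, 2 * B n ≤ B (n + 1) := by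
    intro n
    rw [hBsucc]
    calc 2 * B n ≤ 2 * Nat.lcm (B n) (s n) := by
          have := Nat.le_of_dvd (Nat.pos_of_ne_zero
            (Nat.lcm_ne_zero (hBpos n).ne' (hs n).1.ne')) (Nat.dvd_lcm_left (B n) (s n))
          omega
      _ = Nat.lcm (B n) (s n) * 2 := by ring
      _ ≤ Nat.lcm (B n) (s n) * p := Nat.mul_le_mul_left _ hp2
  -- ratios
  set q : ℕ → ℕ := fun n => B (n + 1) / B n with hq_def
  have hq : ∀ n, B n * q n = B (n + 1) := fun n => Nat.mul_div_cancel' (hBdvd n) 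
  have hq2 : ∀ n, 2 ≤ q n := by
    intro n
    have h2 := hBgrow n
    rw [← hq n] at h2
    have := hBpos n
    nlinarith [hq n]
  refine ⟨fun n => (q n : ℤ), fun j => by show (1 : ℤ) < (q j : ℤ); exact_mod_cast hq2 j, ?_⟩
  have hprod : ∀ n, (∏ j ∈ Finset.range (n + 1), ((q j : ℤ) : ℚ)) = (B (n + 1) : ℚ) := by
    intro n
    induction n with
    | zero =>
      rw [Finset.prod_range_one]
      have h01 := hq 0
      rw [hB0, one_mul] at h01
      exact_mod_cast congrArg (fun k : ℕ => (k : ℚ)) h01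
    | succ k ih =>
      rw [Finset.prod_range_succ, ih]
      have := hq (k + 1)
      push_cast [← this]
      ring
  ext x
  simp only [Hgrp, AddSubgroup.mem_mk, Set.mem_setOf_eq]
  constructor
  · rintro ⟨m, n, rfl⟩
    rw [hprod n]
    have : (m : ℚ) / (B (n + 1) : ℚ) = m • ((1 : ℚ) / (B (n + 1) : ℚ)) := by
      rw [zsmul_eq_mul, mul_one_div]
    rw [this]
    exact AddSubgroup.zsmul_mem _ (hBmem (n + 1)) m
  · intro hx
    have hden : (1 : ℚ) / (x.den : ℚ) ∈ E := aux_inv_den E h1 hx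
    have hdpos : 0 < x.den := x.pos
    have hsd : s x.den = x.den := by
      show (if 0 < x.den ∧ (1 : ℚ) / (x.den : ℚ) ∈ E then x.den else 1) = x.den
      rw [if_pos ⟨hdpos, hden⟩]
    have hdvd' : x.den ∣ B (x.den + 1) := by
      have h := hsdvd x.den
      rwa [hsd] at h
    obtain ⟨c, hc⟩ := hdvd'
    have hc0 : 0 < c := by
      have := hBpos (x.den + 1)
      rcases Nat.eq_zero_or_pos c with h | h
      · rw [h, mul_zero] at hc; omega
      · exact h
    refine ⟨x.num * c, x.den, ?_⟩
    rw [hprod x.den, hc]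
    have hc0' : (c : ℚ) ≠ 0 := by exact_mod_cast hc0.ne'
    have hd0' : (x.den : ℚ) ≠ 0 := by exact_mod_cast hdpos.ne'
    push_cast
    have hxd : x * (x.den : ℚ) = (x.num : ℚ) := (eq_div_iff hd0').mp (Rat.num_div_den x).symm
    rw [eq_div_iff (mul_ne_zero hd0' hc0')]
    linear_combination (c : ℚ) * hxd

/-- Any nontrivial subgroup `E` of `ℚ` with unique division by a prime `p`
(`p y ∈ E → y ∈ E`) is isomorphic to a group `H_b` of rationals of the form
`m / (b_0 b_1 ⋯ b_n)` for some sequence `b` of integers `b_j > 1`. -/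
theorem subgroup_with_p_division_iso_Hgrp
    (p : ℕ) (hp : p.Prime) (E : AddSubgroup ℚ) (hE : E ≠ ⊥)
    (hdiv : ∀ y : ℚ, (p : ℚ) * y ∈ E → y ∈ E) :
    ∃ (b : ℕ → ℤ) (hb : ∀ j, 1 < b j), Nonempty (E ≃+ Hgrp b hb) := by
  obtain ⟨e, heE, he0⟩ : ∃ e ∈ E, e ≠ 0 := by
    by_contra h
    push_neg at h
    exact hE ((AddSubgroup.eq_bot_iff_forall E).mpr h)
  let φ : ℚ ≃+ ℚ :=
    { toFun := fun x => x / e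
      invFun := fun x => x * e
      left_inv := fun x => div_mul_cancel₀ x he0
      right_inv := fun x => mul_div_cancel_right₀ x he0
      map_add' := fun x y => add_div x y e }
  set E' := AddSubgroup.map (φ : ℚ →+ ℚ) E with hE'def
  have hmem : ∀ x : ℚ, x ∈ E' ↔ x * e ∈ E := by
    intro x
    constructor
    · rintro ⟨y, hy, rfl⟩
      simpa [φ, div_mul_cancel₀ y he0] using hy
    · intro hx
      exact ⟨x * e, hx, by simp [φ, mul_div_cancel_right₀ x he0]⟩
  have h1 : (1 : ℚ) ∈ E' := (hmem 1).mpr (by simpa using heE)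
  have hdiv' : ∀ y : ℚ, (p : ℚ) * y ∈ E' → y ∈ E' := by
    intro y hy
    rw [hmem] at hy
    rw [hmem]
    exact hdiv (y * e) (by rw [← mul_assoc]; exact hy)
  obtain ⟨b, hb, hHE⟩ := aux_key p hp E' h1 hdiv'
  exact ⟨b, hb, ⟨(AddEquiv.addSubgroupMap φ E).trans (AddEquiv.addSubgroupCongr hHE.symm)⟩⟩
end

section
/- Let a = (a_0, a_1, a_2, …) be a sequence of integers with a_j > 1 for all j. Then the following are equivalent: (α) there exist n ≥ 2 and nonzero rational numbers r_1, …, r_n with r_j·H_a = H_a for each j and r_1² + ⋯ + r_n² = 1; (γ) there exists a prime number p such that the set {j : p divides a_j} is infinite. -/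
open scoped BigOperators

def Pprod (a : ℕ → ℤ) (n : ℕ) : ℤ := ∏ j ∈ Finset.range (n + 1), a j

lemma Pprod_pos (a : ℕ → ℤ) (ha : ∀ j, 1 < a j) (n : ℕ) : 0 < Pprod a n :=
  Finset.prod_pos fun j _ => by linarith [ha j]

lemma Pprod_ne_zero (a : ℕ → ℤ) (ha : ∀ j, 1 < a j) (n : ℕ) : ((Pprod a n : ℤ) : ℚ) ≠ 0 := by
  exact_mod_cast (Pprod_pos a ha n).ne'


lemma natAbs_Pprod (a : ℕ → ℤ) (k : ℕ) :
    (Pprod a k).natAbs = ∏ j ∈ Finset.range (k + 1), (a j).natAbs := by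
  unfold Pprod
  induction (Finset.range (k+1)) using Finset.cons_induction with
  | empty => simp
  | cons x s hx ih => rw [Finset.prod_cons, Finset.prod_cons, Int.natAbs_mul, ih]

lemma exists_bound (a : ℕ → ℤ) (ha : ∀ j, 1 < a j) (q : ℕ) (hq : q.Prime)
    (hfin : {j | (q : ℤ) ∣ a j}.Finite) :
    ∃ M : ℕ, ∀ k t, (q : ℤ) ^ t ∣ Pprod a k → t ≤ M := by
  refine ⟨∑ j ∈ hfin.toFinset, (a j).natAbs.factorization q, fun k t hdvd => ?_⟩
  have hP0 : (Pprod a k).natAbs ≠ 0 := by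
    have := Pprod_pos a ha k; omega
  have hdvd' : q ^ t ∣ (Pprod a k).natAbs := by
    have := Int.natAbs_dvd_natAbs.mpr hdvd
    simpa [Int.natAbs_pow] using this
  have hle := (hq.pow_dvd_iff_le_factorization hP0).mp hdvd'
  refine hle.trans ?_
  have hne : ∀ j ∈ Finset.range (k + 1), (a j).natAbs ≠ 0 := fun j _ => by
    have := ha j; omega
  have hfac : (Pprod a k).natAbs.factorization q
      = ∑ j ∈ Finset.range (k + 1), (a j).natAbs.factorization q := by
    rw [natAbs_Pprod, Nat.factorization_prod hne]
    simp [Finset.sum_apply']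
  rw [hfac]
  have hstep : ∑ j ∈ Finset.range (k + 1), (a j).natAbs.factorization q
      = ∑ j ∈ (Finset.range (k + 1)).filter (fun j => j ∈ hfin.toFinset),
          (a j).natAbs.factorization q := by
    refine (Finset.sum_filter_of_ne fun j _ hj => ?_).symm
    have hdvdj : q ∣ (a j).natAbs := by
      by_contra hnd
      exact hj (Nat.factorization_eq_zero_of_not_dvd hnd)
    have : (q : ℤ) ∣ a j := by
      rw [← Int.natAbs_dvd_natAbs]
      simpa using hdvdj
    simpa using this
  rw [hstep]
  exact Finset.sum_le_sum_of_subset (fun j hj => (Finset.mem_filter.mp hj).2)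

lemma aux_contra (a : ℕ → ℤ) (ha : ∀ j, 1 < a j) (q : ℕ) (hq : q.Prime)
    (hfin : {j | (q : ℤ) ∣ a j}.Finite)
    (u v : ℤ) (hcop : IsCoprime (q : ℤ) v) (hqu : (q : ℤ) ∣ u) (hu : u ≠ 0)
    (hmem : ∀ t : ℕ, ∃ (m : ℤ) (k : ℕ),
      (v : ℚ) ^ t / (u : ℚ) ^ t = (m : ℚ) / ((Pprod a k : ℤ) : ℚ)) : False := by
  obtain ⟨M, hM⟩ := exists_bound a ha q hq hfin
  obtain ⟨m, k, heq⟩ := hmem (M + 1)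
  have hu' : ((u : ℚ)) ^ (M + 1) ≠ 0 := pow_ne_zero _ (by exact_mod_cast hu)
  have hP' := Pprod_ne_zero a ha k
  have hZ : v ^ (M + 1) * Pprod a k = m * u ^ (M + 1) := by
    have := (div_eq_div_iff hu' hP').mp heq
    exact_mod_cast this
  have hdvd : (q : ℤ) ^ (M + 1) ∣ v ^ (M + 1) * Pprod a k := by
    refine dvd_trans (pow_dvd_pow_of_dvd hqu _) ⟨m, ?_⟩
    rw [hZ]; ring
  have hqP : (q : ℤ) ^ (M + 1) ∣ Pprod a k :=
    (hcop.pow).dvd_of_dvd_mul_left hdvd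
  have := hM k (M + 1) hqP
  omega

/-- The image of a subgroup of `ℚ` under multiplication by a rational number. -/
def ratSMul (r : ℚ) (Y : AddSubgroup ℚ) : Set ℚ := (fun y => r * y) '' (Y : Set ℚ)

section Main

variable (a : ℕ → ℤ) (ha : ∀ j, 1 < a j)

lemma mem_Hgrp_iff (x : ℚ) :
    x ∈ Hgrp a ha ↔ ∃ (m : ℤ) (k : ℕ), x = (m : ℚ) / ((Pprod a k : ℤ) : ℚ) := by
  constructor
  · rintro ⟨m, n, rfl⟩
    exact ⟨m, n, by push_cast [Pprod]; ring⟩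
  · rintro ⟨m, k, rfl⟩
    exact ⟨m, k, by push_cast [Pprod]; ring⟩

lemma one_mem_Hgrp : (1 : ℚ) ∈ Hgrp a ha := by
  rw [mem_Hgrp_iff]
  exact ⟨Pprod a 0, 0, by rw [div_self (Pprod_ne_zero a ha 0)]⟩

lemma eq_one_or_neg_one_of_ratSMul
    (hfin : ∀ p : ℕ, p.Prime → {j : ℕ | (p : ℤ) ∣ a j}.Finite)
    (r : ℚ) (hr : r ≠ 0)
    (h : ratSMul r (Hgrp a ha) = (Hgrp a ha : Set ℚ)) : r = 1 ∨ r = -1 := by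
  have hmul : ∀ x : ℚ, x ∈ Hgrp a ha → r * x ∈ Hgrp a ha := by
    intro x hx
    have hx' : r * x ∈ ratSMul r (Hgrp a ha) := ⟨x, hx, rfl⟩
    rw [h] at hx'
    exact hx'
  have hdiv : ∀ x : ℚ, x ∈ Hgrp a ha → x / r ∈ Hgrp a ha := by
    intro x hx
    have hx' : x ∈ ratSMul r (Hgrp a ha) := by rw [h]; exact hx
    obtain ⟨y, hy, rfl⟩ := hx'
    simp only []
    rw [mul_comm, mul_div_assoc, div_self hr, mul_one]
    exact hy
  have hpow : ∀ t : ℕ, r ^ t ∈ Hgrp a ha := by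
    intro t
    induction t with
    | zero => simpa using one_mem_Hgrp a ha
    | succ t ih => rw [pow_succ, mul_comm]; exact hmul _ ih
  have hpowinv : ∀ t : ℕ, (r⁻¹) ^ t ∈ Hgrp a ha := by
    intro t
    induction t with
    | zero => simpa using one_mem_Hgrp a ha
    | succ t ih =>
      have h2 := hdiv _ ih
      rwa [div_eq_mul_inv, ← pow_succ] at h2
  have hnum0 : r.num ≠ 0 := Rat.num_ne_zero.mpr hr
  have hden0 : (r.den : ℤ) ≠ 0 := by exact_mod_cast r.den_nz
  have hinv : r⁻¹ = (r.den : ℚ) / (r.num : ℚ) := by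
    conv_lhs => rw [← Rat.num_div_den r]
    rw [inv_div]
  have hnum : r.num.natAbs = 1 := by
    by_contra hne
    obtain ⟨q, hq, hqd⟩ := Nat.exists_prime_and_dvd hne
    have hqnum : (q : ℤ) ∣ r.num := by
      rw [← Int.natAbs_dvd_natAbs]; simpa using hqd
    have hcopN : Nat.Coprime q r.den := Nat.Coprime.coprime_dvd_left hqd r.reduced
    have hcop : IsCoprime ((q : ℕ) : ℤ) ((r.den : ℕ) : ℤ) := by
      rw [Int.isCoprime_iff_gcd_eq_one, Int.gcd_natCast_natCast]
      exact hcopN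
    refine aux_contra a ha q hq (hfin q hq) r.num (r.den : ℤ) hcop hqnum hnum0 ?_
    intro t
    have ht := hpowinv t
    rw [mem_Hgrp_iff] at ht
    obtain ⟨m, k, hk⟩ := ht
    rw [hinv, div_pow] at hk
    exact ⟨m, k, hk⟩
  have hden : r.den = 1 := by
    by_contra hne
    obtain ⟨q, hq, hqd⟩ := Nat.exists_prime_and_dvd hne
    have hqden : (q : ℤ) ∣ (r.den : ℤ) := by exact_mod_cast hqd
    have hcopN : Nat.Coprime q r.num.natAbs :=
      Nat.Coprime.coprime_dvd_left hqd r.reduced.symm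
    have hcop : IsCoprime ((q : ℕ) : ℤ) r.num := by
      rw [Int.isCoprime_iff_gcd_eq_one]
      have : Int.gcd ((q : ℕ) : ℤ) r.num = Nat.gcd q r.num.natAbs := by
        simp [Int.gcd]
      rw [this]
      exact hcopN
    refine aux_contra a ha q hq (hfin q hq) (r.den : ℤ) r.num hcop hqden hden0 ?_
    intro t
    have ht := hpow t
    rw [mem_Hgrp_iff] at ht
    obtain ⟨m, k, hk⟩ := ht
    conv at hk => lhs; rw [← Rat.num_div_den r]
    rw [div_pow] at hk
    exact ⟨m, k, hk⟩
  have hr' : r = (r.num : ℚ) := by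
    conv_lhs => rw [← Rat.num_div_den r]
    rw [hden]
    simp
  rcases Int.natAbs_eq_iff.mp hnum with h1 | h1
  · left; rw [hr', h1]; norm_num
  · right; rw [hr', h1]; norm_num


end Main

/-- Remark 2.3, (α) ⟺ (γ): there exist `n ≥ 2` nonzero rationals `r_j` acting as
automorphisms of `H_a` with `r_1² + ⋯ + r_n² = 1` if and only if some prime `p`
divides infinitely many of the numbers `a_j`. -/

theorem exists_automorphisms_sum_sq_one_iff
    (a : ℕ → ℤ) (ha : ∀ j, 1 < a j) :
    (∃ (n : ℕ), 2 ≤ n ∧ ∃ r : Fin n → ℚ, (∀ j, r j ≠ 0) ∧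
        (∀ j, ratSMul (r j) (Hgrp a ha) = (Hgrp a ha : Set ℚ)) ∧
        ∑ j, (r j) ^ 2 = 1) ↔
      ∃ p : ℕ, p.Prime ∧ {j : ℕ | (p : ℤ) ∣ a j}.Infinite := by
  constructor
  · rintro ⟨n, hn2, r, hr0, hrH, hsum⟩
    by_contra hcon
    push_neg at hcon
    have hfin : ∀ p : ℕ, p.Prime → {j : ℕ | (p : ℤ) ∣ a j}.Finite := by
      intro p hp
      exact hcon p hp
    have hsq : ∀ j, (r j) ^ 2 = 1 := by
      intro j
      rcases eq_one_or_neg_one_of_ratSMul a ha hfin (r j) (hr0 j) (hrH j) with h1 | h1 <;>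
        rw [h1] <;> ring
    rw [Finset.sum_congr rfl (fun j _ => hsq j)] at hsum
    simp only [Finset.sum_const, Finset.card_univ, Fintype.card_fin, nsmul_eq_mul,
      mul_one] at hsum
    have : n = 1 := by exact_mod_cast hsum
    omega
  · rintro ⟨p, hp, hinf⟩
    have hp2 := hp.two_le
    have hpZ : ((p : ℕ) : ℤ) ≠ 0 := by exact_mod_cast hp.pos.ne'
    have hpQ : ((p : ℕ) : ℚ) ≠ 0 := by exact_mod_cast hp.pos.ne'
    refine ⟨p * p, by nlinarith, fun _ => ((p : ℕ) : ℚ)⁻¹, fun j => inv_ne_zero hpQ, ?_, ?_⟩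
    · intro j
      ext x
      constructor
      · rintro ⟨y, hy, rfl⟩
        simp only [SetLike.mem_coe] at hy ⊢
        rw [mem_Hgrp_iff] at hy
        obtain ⟨m, n, rfl⟩ := hy
        rw [mem_Hgrp_iff]
        obtain ⟨jj, hjj, hlt⟩ := hinf.exists_gt n
        have hsplit : Pprod a jj = Pprod a n * ∏ i ∈ Finset.Ico (n + 1) (jj + 1), a i := by
          unfold Pprod
          simp only [Finset.range_eq_Ico]
          exact (Finset.prod_Ico_consecutive a (Nat.zero_le (n + 1)) (by omega : n + 1 ≤ jj + 1)).symm
        have hdvd : ((p : ℕ) : ℤ) ∣ ∏ i ∈ Finset.Ico (n + 1) (jj + 1), a i := by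
          refine dvd_trans hjj (Finset.dvd_prod_of_mem a ?_)
          simp only [Finset.mem_Ico]
          omega
        obtain ⟨c, hc⟩ := hdvd
        have hprodpos : 0 < ∏ i ∈ Finset.Ico (n + 1) (jj + 1), a i :=
          Finset.prod_pos fun i _ => by linarith [ha i]
        have hppos : (0 : ℤ) < (p : ℕ) := by exact_mod_cast hp.pos
        have hcpos : 0 < c := by nlinarith
        have hcQ : ((c : ℤ) : ℚ) ≠ 0 := by exact_mod_cast hcpos.ne'
        have hPn : ((Pprod a n : ℤ) : ℚ) ≠ 0 := Pprod_ne_zero a ha n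
        refine ⟨m * c, jj, ?_⟩
        rw [hsplit, hc]
        push_cast
        field_simp
      · intro hx
        simp only [SetLike.mem_coe, mem_Hgrp_iff] at hx
        obtain ⟨m, n, rfl⟩ := hx
        have hPn : ((Pprod a n : ℤ) : ℚ) ≠ 0 := Pprod_ne_zero a ha n
        refine ⟨(((p : ℕ) * m : ℤ) : ℚ) / ((Pprod a n : ℤ) : ℚ), ?_, ?_⟩
        · simp only [SetLike.mem_coe, mem_Hgrp_iff]
          exact ⟨(p : ℕ) * m, n, rfl⟩
        · push_cast
          field_simp
    · simp only [Finset.sum_const, Finset.card_univ, Fintype.card_fin, nsmul_eq_mul]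
      rw [inv_pow]
      rw [mul_inv_eq_one₀ (by positivity)]
      push_cast
      ring
end

section
/- Let a = (a_0, a_1, a_2, …) be a sequence of integers with a_j > 1 for all j, and suppose that no prime number divides a_j for infinitely many j. Then the only additive group automorphisms of H_a are the identity map and negation x ↦ −x. -/
open scoped BigOperators

section AuxAutHgrp

/-- Auxiliary: the product `a 0 * ⋯ * a n`. -/
def Pden (a : ℕ → ℤ) (n : ℕ) : ℤ := ∏ j ∈ Finset.range (n+1), a j

theorem mem_Hgrp' {a : ℕ → ℤ} {ha : ∀ j, 1 < a j} {x : ℚ} :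
    x ∈ Hgrp a ha ↔ ∃ (m : ℤ) (n : ℕ),
      x = (m : ℚ) / ((Pden a n : ℤ) : ℚ) := by
  unfold Pden
  constructor <;> rintro ⟨m, n, rfl⟩ <;> exact ⟨m, n, by push_cast; ring⟩

theorem prod_split_aux (a : ℕ → ℤ) {n k : ℕ} (hnk : n ≤ k) :
    Pden a k = Pden a n * ∏ j ∈ Finset.Ico (n+1) (k+1), a j := by
  unfold Pden
  simp only [Finset.range_eq_Ico]
  exact (Finset.prod_Ico_consecutive a (Nat.zero_le (n + 1)) (by omega)).symm

theorem Pden_pos (a : ℕ → ℤ) (ha : ∀ j, 1 < a j) (n : ℕ) : 0 < Pden a n :=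
  Finset.prod_pos fun j _ => lt_trans one_pos (ha j)

end AuxAutHgrp

/-- Remark 2.3 (alternative): if no prime divides infinitely many of the `a_j`, then the
only automorphisms of `H_a` are the identity and negation. -/
theorem aut_Hgrp_eq_pm_id
    (a : ℕ → ℤ) (ha : ∀ j, 1 < a j)
    (h : ∀ p : ℕ, p.Prime → {j : ℕ | (p : ℤ) ∣ a j}.Finite)
    (e : Hgrp a ha ≃+ Hgrp a ha) :
    (∀ x : Hgrp a ha, (e x : ℚ) = (x : ℚ)) ∨
      (∀ x : Hgrp a ha, (e x : ℚ) = -(x : ℚ)) := by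
  classical
  have hPne : ∀ n, ((Pden a n : ℤ) : ℚ) ≠ 0 := fun n => by
    exact_mod_cast (Pden_pos a ha n).ne'
  -- 1 ∈ H
  have hone : (1:ℚ) ∈ Hgrp a ha := mem_Hgrp'.mpr ⟨Pden a 0, 0, by
    rw [div_self (hPne 0)]⟩
  -- every element can be written with large denominator index
  have mem_large : ∀ x ∈ Hgrp a ha, ∀ N : ℕ, ∃ (m : ℤ) (n : ℕ), N ≤ n ∧
      (x : ℚ) = (m : ℚ) / ((Pden a n : ℤ) : ℚ) := by
    intro x hx N
    obtain ⟨m, n, hmn⟩ := mem_Hgrp'.mp hx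
    rcases le_total N n with hle | hle
    · exact ⟨m, n, hle, hmn⟩
    · refine ⟨m * ∏ j ∈ Finset.Ico (n+1) (N+1), a j, N, le_refl N, ?_⟩
      have hQ : ((∏ j ∈ Finset.Ico (n+1) (N+1), a j : ℤ) : ℚ) ≠ 0 := by
        have : (0:ℤ) < ∏ j ∈ Finset.Ico (n+1) (N+1), a j :=
          Finset.prod_pos fun j _ => lt_trans one_pos (ha j)
        exact_mod_cast this.ne'
      rw [hmn, prod_split_aux a hle, Int.cast_mul, Int.cast_mul,
        mul_div_mul_right _ _ hQ]
  -- the scaling lemma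
  have scale : ∀ (f : Hgrp a ha ≃+ Hgrp a ha) (x : Hgrp a ha),
      (f x : ℚ) = (f ⟨1, hone⟩ : ℚ) * (x : ℚ) := by
    intro f x
    obtain ⟨m, n, hx⟩ := mem_Hgrp'.mp x.2
    have h1 : (Pden a n) • x = m • (⟨1, hone⟩ : Hgrp a ha) := by
      apply Subtype.ext
      have c1 : ((Pden a n • x : Hgrp a ha) : ℚ) = ((Pden a n : ℤ) : ℚ) * (x : ℚ) := by
        push_cast [zsmul_eq_mul]; ring
      have c2 : (((m • (⟨1, hone⟩ : Hgrp a ha)) : Hgrp a ha) : ℚ) = (m : ℚ) := by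
        push_cast [zsmul_eq_mul]; ring
      rw [c1, c2, hx, mul_div_assoc', mul_comm, mul_div_assoc, div_self (hPne n), mul_one]
    have h2 := congrArg f h1
    rw [map_zsmul, map_zsmul] at h2
    have h3 : ((Pden a n : ℤ) : ℚ) * (f x : ℚ) = (m : ℚ) * ((f ⟨1, hone⟩ : Hgrp a ha) : ℚ) := by
      have := congrArg (Subtype.val) h2
      push_cast [zsmul_eq_mul] at this
      exact this
    rw [hx, eq_comm, mul_comm ((f ⟨1, hone⟩ : Hgrp a ha) : ℚ), div_mul_eq_mul_div,
      div_eq_iff (hPne n), mul_comm ((f x : ℚ))]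
    exact h3.symm
  -- denominator lemma
  have den_one : ∀ r : ℚ, (∀ x ∈ Hgrp a ha, r * x ∈ Hgrp a ha) → r.den = 1 := by
    intro r hr
    by_contra hden
    obtain ⟨p, hp, hpd⟩ := Nat.exists_prime_and_dvd hden
    obtain ⟨N, hN⟩ := (h p hp).bddAbove
    have hx : (1:ℚ) / ((Pden a N : ℤ) : ℚ) ∈ Hgrp a ha :=
      mem_Hgrp'.mpr ⟨1, N, by push_cast; ring⟩
    obtain ⟨m, n, hNn, hmn⟩ := mem_large _ (hr _ hx) N
    set Q : ℤ := ∏ j ∈ Finset.Ico (N+1) (n+1), a j with hQdef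
    have hQpos : (0:ℤ) < Q := Finset.prod_pos fun j _ => lt_trans one_pos (ha j)
    have hQne : ((Q : ℤ) : ℚ) ≠ 0 := by exact_mod_cast hQpos.ne'
    have h1 : r * ((1:ℚ) / ((Pden a N : ℤ) : ℚ)) = (m : ℚ) / ((Pden a n : ℤ) : ℚ) := hmn
    rw [prod_split_aux a hNn, ← hQdef, Int.cast_mul, mul_one_div,
      div_eq_div_iff (hPne N) (mul_ne_zero (hPne N) hQne)] at h1
    have h2 : (r * (Q : ℚ)) * ((Pden a N : ℤ) : ℚ) = (m : ℚ) * ((Pden a N : ℤ) : ℚ) := by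
      linear_combination h1
    have hr' : r = (m : ℚ) / ((Q : ℤ) : ℚ) := by
      rw [eq_div_iff hQne]
      exact mul_right_cancel₀ (hPne N) h2
    have hdvd : ((r.den : ℤ)) ∣ Q := by
      have hd := Rat.den_dvd m Q
      rw [Rat.divInt_eq_div, ← hr'] at hd
      exact hd
    have hpdvd : (p : ℤ) ∣ Q := dvd_trans (Int.natCast_dvd_natCast.mpr hpd) hdvd
    obtain ⟨j, hj, hpj⟩ :=
      (Prime.dvd_finset_prod_iff (Nat.prime_iff_prime_int.mp hp) _).mp hpdvd
    have hjN : j ≤ N := hN (show j ∈ {j : ℕ | (p : ℤ) ∣ a j} from hpj)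
    have := (Finset.mem_Ico.mp hj).1
    omega
  -- put everything together
  set q : ℚ := ((e ⟨1, hone⟩ : Hgrp a ha) : ℚ) with hq
  set q' : ℚ := ((e.symm ⟨1, hone⟩ : Hgrp a ha) : ℚ) with hq'
  have hqq' : q' * q = 1 := by
    have h1 : ((e.symm (e ⟨1, hone⟩) : Hgrp a ha) : ℚ) = q' * q := scale e.symm (e ⟨1, hone⟩)
    rw [e.symm_apply_apply] at h1
    exact h1.symm
  have hclos : ∀ x ∈ Hgrp a ha, q * x ∈ Hgrp a ha := by
    intro x hx
    have hs := scale e ⟨x, hx⟩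
    rw [← hs]
    exact (e ⟨x, hx⟩).2
  have hclos' : ∀ x ∈ Hgrp a ha, q' * x ∈ Hgrp a ha := by
    intro x hx
    have hs := scale e.symm ⟨x, hx⟩
    rw [← hs]
    exact (e.symm ⟨x, hx⟩).2
  have hqden : q.den = 1 := den_one q hclos
  have hq'den : q'.den = 1 := den_one q' hclos'
  have hqnum : (q.num : ℚ) = q := by
    rw [← Rat.num_div_den q, hqden]; simp
  have hq'num : (q'.num : ℚ) = q' := by
    rw [← Rat.num_div_den q', hq'den]; simp
  have hint : q.num * q'.num = 1 := by
    have hc : ((q.num * q'.num : ℤ) : ℚ) = ((1:ℤ) : ℚ) := by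
      push_cast [hqnum, hq'num]
      rw [mul_comm]; exact_mod_cast hqq'
    exact_mod_cast hc
  have hunit : q.num = 1 ∨ q.num = -1 :=
    Int.isUnit_iff.mp (IsUnit.of_mul_eq_one _ hint)
  rcases hunit with h1 | h1
  · left
    intro x
    rw [scale e x, ← hq, ← hqnum, h1]
    push_cast; ring
  · right
    intro x
    rw [scale e x, ← hq, ← hqnum, h1]
    push_cast; ring
end

section
/- Let a = (a_0, a_1, a_2, …) be a sequence of integers with a_j > 1 for all j. Suppose p is a prime number such that p divides a_j for infinitely many j, while every prime q ≠ p divides a_j for only finitely many j. Then every additive group automorphism of H_a is multiplication by ε·p^m for some ε ∈ {−1, 1} and some integer m ∈ ℤ (where necessarily multiplication by p^m maps H_a onto H_a). -/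
open scoped BigOperators

/-- If every power of `x` lies in the set of fractions with denominators `P (n+1)`,
and `q`-power divisibility of `P` is uniformly bounded, then `q` does not divide
the denominator of `x`. -/
lemma aux_not_dvd_den (P : ℕ → ℕ) (hP : ∀ n, P n ≠ 0) (q B : ℕ) (hq : q.Prime) (hB : B ≠ 0)
    (hbd : ∀ n k, q ^ k ∣ P (n + 1) → q ^ k ∣ B)
    (x : ℚ) (hx : ∀ k : ℕ, ∃ (m : ℤ) (n : ℕ), (x ^ k : ℚ) = (m : ℚ) / (P (n + 1) : ℚ)) :
    ¬ q ∣ x.den := by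
  intro hdvd
  set K := B + 1 with hK
  have hqB : ¬ q ^ K ∣ B := by
    intro h
    have h1 : q ^ K ≤ B := Nat.le_of_dvd (Nat.pos_of_ne_zero hB) h
    have h2 : 2 ^ K ≤ q ^ K := Nat.pow_le_pow_left hq.two_le K
    have h3 : B < 2 ^ B := Nat.lt_two_pow_self
    have h4 : (2:ℕ) ^ B ≤ 2 ^ K := Nat.pow_le_pow_right (by norm_num) (by omega)
    omega
  obtain ⟨m, n, hmn⟩ := hx K
  have hPne : ((P (n + 1) : ℕ) : ℚ) ≠ 0 := by exact_mod_cast hP (n + 1)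
  have hden : ((x.den : ℚ)) ≠ 0 := by exact_mod_cast x.den_nz
  -- integer equation
  have hZ : x.num ^ K * (P (n + 1) : ℤ) = m * (x.den : ℤ) ^ K := by
    have h1 : ((x ^ K : ℚ)) = ((x.num ^ K : ℤ) : ℚ) / ((x.den ^ K : ℕ) : ℚ) := by
      rw [← Rat.num_pow, ← Rat.den_pow, Rat.num_div_den]
    rw [h1] at hmn
    have hd2 : ((x.den ^ K : ℕ) : ℚ) ≠ 0 := by positivity
    field_simp at hmn
    exact_mod_cast (hmn.trans (mul_comm _ _))
  have hN : x.num.natAbs ^ K * P (n + 1) = m.natAbs * x.den ^ K := by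
    have := congrArg Int.natAbs hZ
    simpa [Int.natAbs_mul, Int.natAbs_pow] using this
  have hqN : ¬ q ∣ x.num.natAbs := by
    intro h
    have : q ∣ Nat.gcd x.num.natAbs x.den := Nat.dvd_gcd h hdvd
    rw [x.reduced] at this
    exact hq.one_lt.ne' (Nat.eq_one_of_dvd_one this)
  have hcop : Nat.Coprime (q ^ K) (x.num.natAbs ^ K) :=
    ((Nat.Prime.coprime_iff_not_dvd hq).mpr hqN).pow K K
  have hd1 : q ^ K ∣ x.num.natAbs ^ K * P (n + 1) := by
    rw [hN]
    exact Dvd.dvd.mul_left (pow_dvd_pow_of_dvd hdvd K) _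
  have : q ^ K ∣ P (n + 1) := hcop.dvd_of_dvd_mul_left hd1
  exact hqB (hbd n K this)

/-- Under condition (i) of the main theorem, every automorphism of `H_a` is
multiplication by `± p^m` for some integer `m` (and multiplication by `p^m` maps
`H_a` onto `H_a`). -/
theorem aut_Hgrp_eq_pm_pow_p
    (a : ℕ → ℤ) (ha : ∀ j, 1 < a j) (p : ℕ) (hp : p.Prime)
    (hpinf : {j : ℕ | (p : ℤ) ∣ a j}.Infinite)
    (hq : ∀ q : ℕ, q.Prime → q ≠ p → {j : ℕ | (q : ℤ) ∣ a j}.Finite)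
    (e : Hgrp a ha ≃+ Hgrp a ha) :
    ∃ (ε : ℤ) (m : ℤ), (ε = 1 ∨ ε = -1) ∧
      ratSMul ((p : ℚ) ^ m) (Hgrp a ha) = (Hgrp a ha : Set ℚ) ∧
      ∀ x : Hgrp a ha, (e x : ℚ) = (ε : ℚ) * (p : ℚ) ^ m * (x : ℚ) := by
  classical
  -- `1` belongs to `H`
  have haj : ∀ j, (0:ℤ) < a j := fun j => lt_trans zero_lt_one (ha j)
  set P : ℕ → ℕ := fun n => ∏ j ∈ Finset.range n, (a j).natAbs with hPdef
  have hPpos : ∀ n, 0 < P n := by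
    intro n
    refine Finset.prod_pos fun j _ => ?_
    exact Int.natAbs_pos.mpr (haj j).ne'
  have hPcast : ∀ n, ((P n : ℕ) : ℚ) = ∏ j ∈ Finset.range n, ((a j : ℤ) : ℚ) := by
    intro n
    rw [hPdef]
    push_cast [Nat.cast_natAbs]
    refine Finset.prod_congr rfl fun j _ => ?_
    exact abs_of_nonneg (by exact_mod_cast (haj j).le)
  have hPneQ : ∀ n, ((P n : ℕ) : ℚ) ≠ 0 := fun n => by exact_mod_cast (hPpos n).ne'
  have memH : ∀ x : ℚ, x ∈ Hgrp a ha ↔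
      ∃ (m : ℤ) (n : ℕ), x = (m : ℚ) / ((P (n + 1) : ℕ) : ℚ) := by
    intro x
    have hdef : x ∈ Hgrp a ha ↔ ∃ (m : ℤ) (n : ℕ),
        x = (m : ℚ) / ∏ j ∈ Finset.range (n + 1), ((a j : ℤ) : ℚ) := Iff.rfl
    rw [hdef]
    constructor
    · rintro ⟨m, n, rfl⟩; exact ⟨m, n, by rw [hPcast]⟩
    · rintro ⟨m, n, rfl⟩; exact ⟨m, n, by rw [hPcast]⟩
  have oneH : (1 : ℚ) ∈ Hgrp a ha := by
    rw [memH]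
    exact ⟨(P 1 : ℤ), 0, by rw [eq_comm, div_eq_one_iff_eq (hPneQ 1)]; push_cast; ring⟩
  set oneE : Hgrp a ha := ⟨1, oneH⟩ with honeE
  set r : ℚ := (e oneE : ℚ) with hrdef
  set s : ℚ := (e.symm oneE : ℚ) with hsdef
  -- linearity of any automorphism
  have hlin_gen : ∀ (f : Hgrp a ha ≃+ Hgrp a ha) (x : Hgrp a ha),
      (f x : ℚ) = (f oneE : ℚ) * (x : ℚ) := by
    intro f x
    obtain ⟨m, n, hx⟩ := (memH (x : ℚ)).mp x.2
    set d : ℤ := (P (n + 1) : ℤ) with hddef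
    have hdne : (d : ℚ) ≠ 0 := by
      rw [hddef]; push_cast; exact hPneQ (n + 1)
    have hdx : d • x = m • oneE := by
      apply Subtype.ext
      push_cast
      rw [zsmul_eq_mul, zsmul_eq_mul, hx, mul_one, hddef]
      have hne := hPneQ (n + 1)
      push_cast at hne ⊢
      field_simp
    have heq := congrArg f hdx
    rw [map_zsmul, map_zsmul] at heq
    have hco : d • (f x : ℚ) = m • (f oneE : ℚ) := congrArg Subtype.val heq
    rw [zsmul_eq_mul, zsmul_eq_mul] at hco
    have : (f x : ℚ) = (m : ℚ) / d * (f oneE : ℚ) := by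
      field_simp at hco ⊢
      linarith [hco]
    rw [this, hx, hddef]
    push_cast
    ring
  have hlin : ∀ x : Hgrp a ha, (e x : ℚ) = r * (x : ℚ) := fun x => hlin_gen e x
  have hlin' : ∀ x : Hgrp a ha, (e.symm x : ℚ) = s * (x : ℚ) := fun x => hlin_gen e.symm x
  have hrs : r * s = 1 := by
    have h1 := hlin (e.symm oneE)
    rw [AddEquiv.apply_symm_apply] at h1
    rw [honeE] at h1
    simp only [← hsdef] at h1
    exact h1.symm
  have hrne : r ≠ 0 := fun h => by simp [h] at hrs
  -- all powers of r and s lie in H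
  have hpow : ∀ (f : Hgrp a ha ≃+ Hgrp a ha) (k : ℕ), (f oneE : ℚ) ^ k ∈ Hgrp a ha := by
    intro f k
    induction k with
    | zero => simpa using oneH
    | succ k ih =>
        have h := hlin_gen f ⟨(f oneE : ℚ) ^ k, ih⟩
        rw [pow_succ, mul_comm]
        rw [show ((⟨(f oneE : ℚ) ^ k, ih⟩ : Hgrp a ha) : ℚ) = (f oneE : ℚ) ^ k from rfl] at h
        exact h ▸ (f ⟨(f oneE : ℚ) ^ k, ih⟩).2
  -- for every prime q ≠ p, q divides neither num nor den of r
  have hkey : ∀ q : ℕ, q.Prime → q ≠ p → ∀ x : ℚ,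
      (∀ k : ℕ, x ^ k ∈ Hgrp a ha) → ¬ q ∣ x.den := by
    intro q hqp hqne x hxk
    obtain ⟨J, hJ⟩ := (hq q hqp hqne).bddAbove
    have hnotdvd : ∀ j, J < j → ¬ q ∣ (a j).natAbs := by
      intro j hj hdvd
      have h1 : (q : ℤ) ∣ ((a j).natAbs : ℤ) := Int.natCast_dvd_natCast.mpr hdvd
      rw [Int.natAbs_of_nonneg (haj j).le] at h1
      exact absurd (hJ h1) (by omega)
    have hsplit : ∀ {n k : ℕ}, n ≤ k → P k = P n * ∏ j ∈ Finset.Ico n k, (a j).natAbs := by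
      intro n k hnk
      rw [hPdef]
      simp only [Finset.range_eq_Ico]
      exact (Finset.prod_Ico_consecutive (fun j => (a j).natAbs) (Nat.zero_le n) hnk).symm
    have hbd : ∀ n k, q ^ k ∣ P (n + 1) → q ^ k ∣ P (J + 2) := by
      intro n k hdvd
      rcases le_total (n + 1) (J + 2) with h | h
      · exact dvd_trans hdvd ⟨_, hsplit h⟩
      · rw [hsplit h] at hdvd
        have hcop : Nat.Coprime q (∏ j ∈ Finset.Ico (J + 2) (n + 1), (a j).natAbs) := by
          refine Nat.Coprime.prod_right fun j hj => ?_
          rw [Finset.mem_Ico] at hj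
          exact (Nat.Prime.coprime_iff_not_dvd hqp).mpr (hnotdvd j (by omega))
        exact (Nat.Coprime.pow k 1 hcop).dvd_of_dvd_mul_right (by simpa using hdvd)
    refine aux_not_dvd_den P (fun n => (hPpos n).ne') q (P (J + 2)) hqp (hPpos (J+2)).ne'
      hbd x ?_
    intro k
    exact (memH (x ^ k)).mp (hxk k)
  have hrpow : ∀ k : ℕ, r ^ k ∈ Hgrp a ha := fun k => hpow e k
  have hspow : ∀ k : ℕ, s ^ k ∈ Hgrp a ha := fun k => hpow e.symm k
  have hrden : ∀ q : ℕ, q.Prime → q ≠ p → ¬ q ∣ r.den := fun q h1 h2 =>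
    hkey q h1 h2 r hrpow
  have hsden : ∀ q : ℕ, q.Prime → q ≠ p → ¬ q ∣ s.den := fun q h1 h2 =>
    hkey q h1 h2 s hspow
  -- numerator of r also only divisible by p
  have hnumden : r.num * s.num = (r.den : ℤ) * (s.den : ℤ) := by
    have h1 : (r.num : ℚ) / r.den * ((s.num : ℚ) / s.den) = 1 := by
      rw [Rat.num_div_den, Rat.num_div_den]; exact hrs
    have hrd : ((r.den : ℕ) : ℚ) ≠ 0 := by exact_mod_cast r.den_nz
    have hsd : ((s.den : ℕ) : ℚ) ≠ 0 := by exact_mod_cast s.den_nz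
    field_simp at h1
    exact_mod_cast h1
  have hrnum : ∀ q : ℕ, q.Prime → q ≠ p → ¬ q ∣ r.num.natAbs := by
    intro q h1 h2 hdvd
    have : q ∣ r.den * s.den := by
      have := congrArg Int.natAbs hnumden
      simp only [Int.natAbs_mul, Int.natAbs_natCast] at this
      exact this ▸ Dvd.dvd.mul_right hdvd _
    rcases (Nat.Prime.dvd_mul h1).mp this with h | h
    · exact hrden q h1 h2 h
    · exact hsden q h1 h2 h
  -- hence |num| and den are powers of p
  have hnum0 : r.num.natAbs ≠ 0 := by
    simp only [ne_eq, Int.natAbs_eq_zero, Rat.num_eq_zero]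
    exact hrne
  have hnumpow : ∃ α : ℕ, r.num.natAbs = p ^ α := by
    refine ⟨_, Nat.eq_prime_pow_of_unique_prime_dvd hnum0 fun {d} hd hdvd => ?_⟩
    by_contra hne
    exact hrnum d hd hne hdvd
  have hdenpow : ∃ β : ℕ, r.den = p ^ β := by
    refine ⟨_, Nat.eq_prime_pow_of_unique_prime_dvd r.den_nz fun {d} hd hdvd => ?_⟩
    by_contra hne
    exact hrden d hd hne hdvd
  obtain ⟨α, hα⟩ := hnumpow
  obtain ⟨β, hβ⟩ := hdenpow
  -- assemble ε and m
  set ε : ℤ := r.num.sign with hεdef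
  have hrnum0 : r.num ≠ 0 := by simpa [Rat.num_eq_zero] using hrne
  have hε : ε = 1 ∨ ε = -1 := by
    rcases lt_trichotomy r.num 0 with h | h | h
    · exact Or.inr (Int.sign_eq_neg_one_iff_neg.mpr h)
    · exact absurd h hrnum0
    · exact Or.inl (Int.sign_eq_one_iff_pos.mpr h)
  have hp0 : ((p : ℕ) : ℚ) ≠ 0 := by exact_mod_cast hp.pos.ne'
  have hrdQ : ((r.den : ℕ) : ℚ) ≠ 0 := by exact_mod_cast r.den_nz
  have hnumQ : (r.num : ℚ) = (ε : ℚ) * (p : ℚ) ^ (α : ℕ) := by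
    have h1 : (ε * (r.num.natAbs : ℤ)) = r.num := Int.sign_mul_natAbs r.num
    rw [hα] at h1
    rw [← h1]
    push_cast
    ring
  have hdenQ : ((r.den : ℕ) : ℚ) = (p : ℚ) ^ (β : ℕ) := by rw [hβ]; push_cast; ring
  have key0 : (r.num : ℚ) = r * ((r.den : ℕ) : ℚ) := (div_eq_iff hrdQ).mp (Rat.num_div_den r)
  have key : r * (p : ℚ) ^ (β : ℕ) = (ε : ℚ) * (p : ℚ) ^ (α : ℕ) := by
    rw [← hdenQ, ← key0, hnumQ]
  have hpbne : ((p : ℚ)) ^ (β : ℕ) ≠ 0 := pow_ne_zero _ hp0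
  have hreq : r = (ε : ℚ) * (p : ℚ) ^ ((α : ℤ) - (β : ℤ)) := by
    rw [zpow_sub₀ hp0, zpow_natCast, zpow_natCast, ← mul_div_assoc, eq_div_iff hpbne]
    exact key
  have hεsq : (ε : ℚ) * (ε : ℚ) = 1 := by rcases hε with h | h <;> rw [h] <;> norm_num
  have hpm : (p : ℚ) ^ ((α : ℤ) - (β : ℤ)) = (ε : ℚ) * r := by
    rw [hreq, ← mul_assoc, hεsq, one_mul]
  have hmulε : ∀ z : ℚ, z ∈ Hgrp a ha → (ε : ℚ) * z ∈ Hgrp a ha := by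
    intro z hz
    rcases hε with h | h
    · rw [h]; push_cast; rw [one_mul]; exact hz
    · rw [h]; push_cast; rw [neg_one_mul]; exact neg_mem hz
  refine ⟨ε, (α : ℤ) - (β : ℤ), hε, ?_, ?_⟩
  · unfold ratSMul
    ext y
    simp only [Set.mem_image, SetLike.mem_coe]
    constructor
    · rintro ⟨x, hx, rfl⟩
      rw [hpm, mul_assoc]
      exact hmulε _ ((hlin ⟨x, hx⟩) ▸ (e ⟨x, hx⟩).2)
    · intro hy
      refine ⟨(ε : ℚ) * ((e.symm ⟨y, hy⟩ : Hgrp a ha) : ℚ),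
        hmulε _ (e.symm ⟨y, hy⟩).2, ?_⟩
      rw [hpm, hlin' ⟨y, hy⟩]
      calc (ε : ℚ) * r * ((ε : ℚ) * (s * y))
          = ((ε : ℚ) * (ε : ℚ)) * ((r * s) * y) := by ring
        _ = y := by rw [hεsq, hrs, one_mul, one_mul]
  · intro x
    rw [hlin x, hreq]
end

section
/- Let Y be an abelian group, L a subgroup of Y, and g : L → ℂ a positive definite function on L. Define f : Y → ℂ by f(y) = g(y) for y ∈ L and f(y) = 0 for y ∉ L. Then f is a positive definite function on Y. -/
open scoped BigOperators

private lemma posdef_fintype {G : Type*} [AddCommGroup G] {f : G → ℂ}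
    (hf : IsPositiveDefinite f) {ι : Type*} [Fintype ι] (y : ι → G) (c : ι → ℂ) :
    ∃ t : ℝ, 0 ≤ t ∧ ∑ i, ∑ j, c i * (starRingEnd ℂ) (c j) * f (y i - y j) = (t : ℂ) := by
  obtain ⟨t, ht, hsum⟩ := hf (Fintype.card ι) (y ∘ (Fintype.equivFin ι).symm)
      (c ∘ (Fintype.equivFin ι).symm)
  refine ⟨t, ht, ?_⟩
  rw [← hsum]
  exact Fintype.sum_equiv (Fintype.equivFin ι) _ _ fun i =>
    Fintype.sum_equiv (Fintype.equivFin ι) _ _ fun j => by simp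

/-- Lemma 2.7: the extension by zero of a positive definite function on a subgroup `L`
of an abelian group `Y` is positive definite on `Y`. -/
theorem posdef_extension_by_zero
    {Y : Type*} [AddCommGroup Y] (L : AddSubgroup Y)
    (g : L → ℂ) (hg : IsPositiveDefinite g)
    (f : Y → ℂ)
    (hfL : ∀ (y : Y) (hy : y ∈ L), f y = g ⟨y, hy⟩)
    (hf0 : ∀ y : Y, y ∉ L → f y = 0) :
    IsPositiveDefinite f := by
  intro n y c
  classical
  set π : Y → Y ⧸ L := QuotientAddGroup.mk with hπ
  set T : Fin n → Fin n → ℂ := fun i j => c i * (starRingEnd ℂ) (c j) * f (y i - y j) with hT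
  have key : ∀ a b : Y, π a = π b ↔ a - b ∈ L := fun a b => QuotientAddGroup.eq_iff_sub_mem
  have hzero : ∀ i j : Fin n, π (y i) ≠ π (y j) → T i j = 0 := by
    intro i j h
    have : y i - y j ∉ L := fun hm => h ((key _ _).mpr hm)
    simp [hT, hf0 _ this]
  set s : Finset (Y ⧸ L) := Finset.univ.image (fun i => π (y i)) with hs
  set fib : Y ⧸ L → Finset (Fin n) := fun q => Finset.univ.filter (fun i => π (y i) = q)
    with hfib
  have hdecomp : ∑ i, ∑ j, T i j = ∑ q ∈ s, ∑ i ∈ fib q, ∑ j ∈ fib q, T i j := by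
    rw [← Finset.sum_fiberwise_of_maps_to (g := fun i => π (y i)) (t := s)
      (fun x _ => Finset.mem_image_of_mem _ (Finset.mem_univ x))]
    refine Finset.sum_congr rfl fun q _ => Finset.sum_congr rfl fun i hi => ?_
    have hiq : π (y i) = q := (Finset.mem_filter.mp hi).2
    rw [Finset.sum_filter]
    refine Finset.sum_congr rfl fun j _ => ?_
    by_cases hj : π (y j) = q
    · simp [hj]
    · simp [hj, hzero i j (by rw [hiq]; exact fun h => hj h.symm)]
  have hclass : ∀ q : Y ⧸ L, ∃ t : ℝ, 0 ≤ t ∧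
      ∑ i ∈ fib q, ∑ j ∈ fib q, T i j = (t : ℂ) := by
    intro q
    by_cases hne : ∃ i₀ : Fin n, π (y i₀) = q
    · obtain ⟨i₀, hi₀⟩ := hne
      have hmemL : ∀ i : Fin n, π (y i) = q → y i - y i₀ ∈ L := fun i hi =>
        (key _ _).mp (hi.trans hi₀.symm)
      set z : {i : Fin n // π (y i) = q} → L :=
        fun i => ⟨y i.1 - y i₀, hmemL i.1 i.2⟩ with hz
      obtain ⟨t, ht, hsum⟩ := posdef_fintype hg z (fun i => c i.1)
      refine ⟨t, ht, ?_⟩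
      rw [← hsum]
      rw [Finset.sum_subtype (p := fun i => π (y i) = q) _ (fun i => by simp [hfib])]
      refine Finset.sum_congr rfl fun i _ => ?_
      rw [Finset.sum_subtype (p := fun i => π (y i) = q) _ (fun i => by simp [hfib])]
      refine Finset.sum_congr rfl fun j _ => ?_
      have hij : y i.1 - y j.1 ∈ L := (key _ _).mp (i.2.trans j.2.symm)
      have hzz : z i - z j = ⟨y i.1 - y j.1, hij⟩ := by
        apply Subtype.ext
        show (y i.1 - y i₀) - (y j.1 - y i₀) = y i.1 - y j.1
        abel
      show c ↑i * (starRingEnd ℂ) (c ↑j) * f (y ↑i - y ↑j) = _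
      rw [hfL _ hij, hzz]
    · refine ⟨0, le_refl _, ?_⟩
      have : fib q = ∅ := by
        ext i
        simp only [hfib, Finset.mem_filter, Finset.mem_univ, true_and, Finset.notMem_empty,
          iff_false]
        exact fun h => hne ⟨i, h⟩
      simp [this]
  choose t ht0 hts using hclass
  refine ⟨∑ q ∈ s, t q, Finset.sum_nonneg fun q _ => ht0 q, ?_⟩
  rw [hdecomp, Finset.sum_congr rfl fun q _ => hts q]
  push_cast
  rfl
end

section
/- Let p < q be prime numbers, and let Y be a nontrivial additive subgroup of ℚ such that p·Y = Y and q·Y = Y. Let a, b be positive integers with q^{2a} = p²·b + 1, let H = {m/n ∈ Y : n a positive integer not divisible by p, m ∈ ℤ}, let H_1 = {m/(p·n) ∈ Y : m, n integers not divisible by p, n > 0}, let L = H ∪ H_1, and fix 0 < c < 1. Define f : Y → ℝ by f(y) = 1 for y ∈ H, f(y) = c for y ∈ H_1, and f(y) = 0 otherwise. Then: (1) L is a subgroup of Y; (2) f is a positive definite function on Y with f(0) = 1; (3) f(y) = (f((p/q^a)·y))^b · f((1/q^a)·y) for all y ∈ Y, where the rationals r_1 = ⋯ = r_b = p/q^a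 and r_{b+1} = 1/q^a satisfy r_j·Y = Y and r_1² + ⋯ + r_{b+1}² = 1; and (4) there do not exist σ ≥ 0, a subgroup E of Y, and a character χ of Y such that f(y) = χ(y)·exp(−σ y²) for y ∈ E and f(y) = 0 for y ∉ E. -/
open scoped BigOperators

attribute [local instance] Classical.propDecidable

section Helpers
variable {p : ℕ} [hpf : Fact p.Prime]

lemma not_dvd_num_of_dvd_den {y : ℚ} (h : p ∣ y.den) : ¬ (p : ℤ) ∣ y.num := by
  rw [Int.natCast_dvd]
  intro h2
  have hg := Nat.dvd_gcd h2 h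
  rw [Nat.Coprime.gcd_eq_one y.reduced] at hg
  have := Nat.le_of_dvd one_pos hg
  have := hpf.out.one_lt
  omega

/-- characterization of the `H`-shape -/
lemma formH_iff (y : ℚ) :
    (∃ (m : ℤ) (n : ℕ), 0 < n ∧ ¬ (p ∣ n) ∧ y = (m : ℚ) / (n : ℚ)) ↔
      (y = 0 ∨ 0 ≤ padicValRat p y) := by
  constructor
  · rintro ⟨m, n, hn, hpn, rfl⟩
    rcases eq_or_ne m 0 with rfl | hm
    · left; simp
    · right
      have hn0 : (n : ℚ) ≠ 0 := by positivity
      have hm0 : (m : ℚ) ≠ 0 := by exact_mod_cast hm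
      rw [padicValRat.div hm0 hn0, padicValRat.of_int, padicValRat.of_nat,
        padicValNat.eq_zero_of_not_dvd hpn]
      simp
  · rintro (rfl | hv)
    · exact ⟨0, 1, one_pos, by simpa using hpf.out.one_lt.ne', by simp⟩
    · rcases eq_or_ne y 0 with rfl | hy
      · exact ⟨0, 1, one_pos, by simpa using hpf.out.one_lt.ne', by simp⟩
      refine ⟨y.num, y.den, y.pos, fun hdvd => ?_, (Rat.num_div_den y).symm⟩
      have h1 : padicValInt p y.num = 0 :=
        padicValInt.eq_zero_of_not_dvd (not_dvd_num_of_dvd_den hdvd)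
      have h2 : 1 ≤ padicValNat p y.den := one_le_padicValNat_of_dvd y.pos.ne' hdvd
      rw [padicValRat_def, h1] at hv
      omega

/-- characterization of the `H₁`-shape -/
lemma formH1_iff (y : ℚ) :
    (∃ (m n : ℤ), 0 < n ∧ ¬ ((p : ℤ) ∣ m) ∧ ¬ ((p : ℤ) ∣ n) ∧
        y = (m : ℚ) / ((p : ℚ) * (n : ℚ))) ↔
      (y ≠ 0 ∧ padicValRat p y = -1) := by
  have hp1 := hpf.out.one_lt
  have hp0 : (p : ℚ) ≠ 0 := by positivity
  constructor
  · rintro ⟨m, n, hn, hpm, hpn, rfl⟩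
    have hm : m ≠ 0 := by rintro rfl; exact hpm (dvd_zero _)
    have hm0 : (m : ℚ) ≠ 0 := by exact_mod_cast hm
    have hn0 : (n : ℚ) ≠ 0 := by
      have : n ≠ 0 := hn.ne'
      exact_mod_cast this
    constructor
    · exact div_ne_zero hm0 (mul_ne_zero hp0 hn0)
    · rw [padicValRat.div hm0 (mul_ne_zero hp0 hn0), padicValRat.mul hp0 hn0,
        padicValRat.self hp1]
      rw [show ((m:ℚ)) = ((m:ℤ):ℚ) from rfl, padicValRat.of_int,
        padicValInt.eq_zero_of_not_dvd hpm]
      rw [show ((n:ℚ)) = ((n:ℤ):ℚ) from rfl, padicValRat.of_int,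
        padicValInt.eq_zero_of_not_dvd hpn]
      ring
  · rintro ⟨hy, hv⟩
    have hdvd : p ∣ y.den := by
      by_contra hdvd
      rw [padicValRat_def, padicValNat.eq_zero_of_not_dvd hdvd] at hv
      omega
    have h1 : padicValInt p y.num = 0 :=
      padicValInt.eq_zero_of_not_dvd (not_dvd_num_of_dvd_den hdvd)
    have hvden : padicValNat p y.den = 1 := by
      rw [padicValRat_def, h1] at hv; omega
    set n : ℕ := y.den / p with hn
    have hden : y.den = p * n := (Nat.mul_div_cancel' hdvd).symm
    have hpn : ¬ p ∣ n := by
      intro hpn2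
      have h2 : p ^ 2 ∣ y.den := by
        rw [hden, pow_two]; exact mul_dvd_mul_left p hpn2
      have := (padicValNat_dvd_iff_le (p := p) (Rat.den_ne_zero y)).mp h2
      omega
    have hnn : 0 < n := by
      rcases Nat.eq_zero_or_pos n with h0 | h0
      · exfalso; have := y.pos; rw [hden, h0, mul_zero] at this; omega
      · exact h0
    refine ⟨y.num, (n : ℤ), by exact_mod_cast hnn, not_dvd_num_of_dvd_den hdvd, ?_, ?_⟩
    · rw [Int.natCast_dvd_natCast]; exact hpn
    · rw [show ((p:ℚ) * ((n:ℤ):ℚ)) = ((y.den : ℕ) : ℚ) by push_cast [hden]; ring]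
      exact (Rat.num_div_den y).symm

/-- The subgroup of `Y` of elements with `p`-adic valuation at least `k` (or zero). -/
def valSubgroup (p : ℕ) [Fact p.Prime] (Y : AddSubgroup ℚ) (k : ℤ) : AddSubgroup ℚ where
  carrier := {y | y ∈ Y ∧ (y = 0 ∨ k ≤ padicValRat p y)}
  zero_mem' := ⟨Y.zero_mem, Or.inl rfl⟩
  neg_mem' := by
    rintro x ⟨hxY, hx⟩
    refine ⟨Y.neg_mem hxY, ?_⟩
    rcases hx with rfl | hx
    · left; simp
    · right; rwa [padicValRat.neg]
  add_mem' := by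
    rintro x y ⟨hxY, hx⟩ ⟨hyY, hy⟩
    refine ⟨Y.add_mem hxY hyY, ?_⟩
    by_cases h0 : x + y = 0
    · exact Or.inl h0
    right
    rcases hx with rfl | hx
    · rw [zero_add] at h0 ⊢
      rcases hy with rfl | hy
      · exact absurd rfl h0
      · exact hy
    rcases hy with rfl | hy
    · rw [add_zero]; exact hx
    calc k ≤ min (padicValRat p x) (padicValRat p y) := le_min hx hy
      _ ≤ padicValRat p (x + y) := padicValRat.min_le_padicValRat_add h0

lemma mem_valSubgroup_iff {Y : AddSubgroup ℚ} {k : ℤ} {y : ℚ} :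
    y ∈ valSubgroup p Y k ↔ y ∈ Y ∧ (y = 0 ∨ k ≤ padicValRat p y) := Iff.rfl

end Helpers

section PD

lemma isPD_indicator {G : Type*} [AddCommGroup G] (K : AddSubgroup G) :
    IsPositiveDefinite (fun g => if g ∈ K then (1 : ℂ) else 0) := by
  classical
  intro n y c
  set φ : G → G ⧸ K := QuotientAddGroup.mk with hφ
  set T : Finset (G ⧸ K) := Finset.univ.image fun i => φ (y i) with hT
  refine ⟨∑ k ∈ T, Complex.normSq (∑ i ∈ Finset.univ.filter (fun i => φ (y i) = k), c i),
    Finset.sum_nonneg fun k _ => Complex.normSq_nonneg _, ?_⟩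
  have key : ∀ i j : Fin n, (y i - y j ∈ K) ↔ (φ (y i) = φ (y j)) := fun i j =>
    (QuotientAddGroup.eq_iff_sub_mem).symm
  have expand : ∀ i j : Fin n, (if φ (y i) = φ (y j) then (1 : ℂ) else 0)
      = ∑ k ∈ T, (if φ (y i) = k then (1 : ℂ) else 0) * (if φ (y j) = k then (1 : ℂ) else 0) := by
    intro i j
    rw [Finset.sum_eq_single (φ (y j))]
    · simp
    · intro b _ hb
      simp [hb, Ne.symm hb]
    · intro h
      exact absurd (Finset.mem_image_of_mem _ (Finset.mem_univ j)) h
  calc ∑ i, ∑ j, c i * (starRingEnd ℂ) (c j) * (if y i - y j ∈ K then (1:ℂ) else 0)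
      = ∑ i, ∑ j, ∑ k ∈ T, ((if φ (y i) = k then (1:ℂ) else 0) * c i) *
          ((if φ (y j) = k then (1:ℂ) else 0) * (starRingEnd ℂ) (c j)) := by
        refine Finset.sum_congr rfl fun i _ => Finset.sum_congr rfl fun j _ => ?_
        rw [if_congr (key i j) rfl rfl, expand i j, Finset.mul_sum]
        exact Finset.sum_congr rfl fun k _ => by ring
    _ = ∑ i, ∑ k ∈ T, ∑ j, ((if φ (y i) = k then (1:ℂ) else 0) * c i) *
          ((if φ (y j) = k then (1:ℂ) else 0) * (starRingEnd ℂ) (c j)) :=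
        Finset.sum_congr rfl fun i _ => Finset.sum_comm
    _ = ∑ k ∈ T, ∑ i, ∑ j, ((if φ (y i) = k then (1:ℂ) else 0) * c i) *
          ((if φ (y j) = k then (1:ℂ) else 0) * (starRingEnd ℂ) (c j)) :=
        Finset.sum_comm
    _ = ∑ k ∈ T, (∑ i, (if φ (y i) = k then (1:ℂ) else 0) * c i) *
          (∑ j, (if φ (y j) = k then (1:ℂ) else 0) * (starRingEnd ℂ) (c j)) :=
        Finset.sum_congr rfl fun k _ => (Finset.sum_mul_sum _ _ _ _).symm
    _ = ∑ k ∈ T, (∑ i ∈ Finset.univ.filter (fun i => φ (y i) = k), c i) *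
          (starRingEnd ℂ) (∑ i ∈ Finset.univ.filter (fun i => φ (y i) = k), c i) := by
        refine Finset.sum_congr rfl fun k _ => ?_
        congr 1
        · rw [Finset.sum_filter]
          exact Finset.sum_congr rfl fun i _ => by split <;> simp
        · rw [map_sum, Finset.sum_filter]
          exact Finset.sum_congr rfl fun j _ => by split <;> simp
    _ = ((∑ k ∈ T, Complex.normSq (∑ i ∈ Finset.univ.filter (fun i => φ (y i) = k), c i) : ℝ) : ℂ) := by
        push_cast
        exact Finset.sum_congr rfl fun k _ => (Complex.mul_conj _)

lemma isPD_two_indicators {G : Type*} [AddCommGroup G] (K₁ K₂ : AddSubgroup G)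
    (α β : ℝ) (hα : 0 ≤ α) (hβ : 0 ≤ β) (f : G → ℂ)
    (hf : ∀ g, f g = α * (if g ∈ K₁ then (1:ℂ) else 0) + β * (if g ∈ K₂ then (1:ℂ) else 0)) :
    IsPositiveDefinite f := by
  intro n y c
  obtain ⟨t₁, ht₁, h₁⟩ := isPD_indicator K₁ n y c
  obtain ⟨t₂, ht₂, h₂⟩ := isPD_indicator K₂ n y c
  refine ⟨α * t₁ + β * t₂, by positivity, ?_⟩
  have : ∀ i j : Fin n, c i * (starRingEnd ℂ) (c j) * f (y i - y j)
      = α * (c i * (starRingEnd ℂ) (c j) * (if y i - y j ∈ K₁ then (1:ℂ) else 0))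
        + β * (c i * (starRingEnd ℂ) (c j) * (if y i - y j ∈ K₂ then (1:ℂ) else 0)) := by
    intro i j
    rw [hf (y i - y j)]
    ring
  simp only [this, Finset.sum_add_distrib, ← Finset.mul_sum]
  rw [h₁, h₂]
  push_cast
  ring

end PD

section RatSMul

lemma ratSMul_one (Y : AddSubgroup ℚ) : ratSMul 1 Y = (Y : Set ℚ) := by
  simp [ratSMul]

lemma ratSMul_mul (r s : ℚ) (Y : AddSubgroup ℚ) (hs : ratSMul s Y = (Y : Set ℚ))
    (hr : ratSMul r Y = (Y : Set ℚ)) : ratSMul (r * s) Y = (Y : Set ℚ) := by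
  have : ratSMul (r * s) Y = (fun y => r * y) '' (ratSMul s Y) := by
    rw [ratSMul, ratSMul, Set.image_image]
    simp [mul_assoc]
  rw [this, hs]
  exact hr

lemma ratSMul_inv (r : ℚ) (hr0 : r ≠ 0) (Y : AddSubgroup ℚ)
    (h : ratSMul r Y = (Y : Set ℚ)) : ratSMul r⁻¹ Y = (Y : Set ℚ) := by
  conv_lhs => rw [ratSMul, ← h, ratSMul, Set.image_image]
  have : (fun x => r⁻¹ * (r * x)) = fun x : ℚ => x := by
    funext x; field_simp
  rw [this, Set.image_id']

lemma ratSMul_pow (r : ℚ) (Y : AddSubgroup ℚ) (h : ratSMul r Y = (Y : Set ℚ)) (k : ℕ) :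
    ratSMul (r ^ k) Y = (Y : Set ℚ) := by
  induction k with
  | zero => simpa using ratSMul_one Y
  | succ k ih => rw [pow_succ]; exact ratSMul_mul _ _ _ h ih

end RatSMul

/-- Dual formulation of Proposition 2.8: if two distinct primes `p < q` are invertible on
the subgroup `Y ⊆ ℚ`, then the function `f` equal to `1` on `H`, to `c` on `H₁`, and to
`0` elsewhere is a normalized positive definite solution of the Pólya functional equation
with coefficients `r₁ = ⋯ = r_b = p/qᵃ`, `r_{b+1} = 1/qᵃ`, yet it is not of Gauss–Haar
form. -/
theorem polya_fails_two_primes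
    (p q : ℕ) (hp : p.Prime) (hq : q.Prime) (hpq : p < q)
    (Y : AddSubgroup ℚ) (hY : Y ≠ ⊥)
    (hpY : ratSMul (p : ℚ) Y = (Y : Set ℚ)) (hqY : ratSMul (q : ℚ) Y = (Y : Set ℚ))
    (a b : ℕ) (ha : 0 < a) (hb : 0 < b) (hab : q ^ (2 * a) = p ^ 2 * b + 1)
    (H H₁ : Set ℚ)
    (hH : H = {y : ℚ | y ∈ Y ∧ ∃ (m : ℤ) (n : ℕ), 0 < n ∧ ¬ (p ∣ n) ∧
      y = (m : ℚ) / (n : ℚ)})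
    (hH₁ : H₁ = {y : ℚ | y ∈ Y ∧ ∃ (m n : ℤ), 0 < n ∧ ¬ ((p : ℤ) ∣ m) ∧ ¬ ((p : ℤ) ∣ n) ∧
      y = (m : ℚ) / ((p : ℚ) * (n : ℚ))})
    (c : ℝ) (hc0 : 0 < c) (hc1 : c < 1)
    (f : Y → ℝ)
    (hf1 : ∀ y : Y, (y : ℚ) ∈ H → f y = 1)
    (hfc : ∀ y : Y, (y : ℚ) ∈ H₁ → f y = c)
    (hf0 : ∀ y : Y, (y : ℚ) ∉ H ∪ H₁ → f y = 0)
    (hm1 : ∀ y : Y, ((p : ℚ) / (q : ℚ) ^ a) * (y : ℚ) ∈ Y)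
    (hm2 : ∀ y : Y, (1 / (q : ℚ) ^ a) * (y : ℚ) ∈ Y) :
    -- (1) L = H ∪ H₁ is a subgroup of Y
    (∃ L : AddSubgroup ℚ, (L : Set ℚ) = H ∪ H₁ ∧ L ≤ Y) ∧
    -- (2) f is positive definite with f(0) = 1
    (IsPositiveDefinite (fun y : Y => (f y : ℂ)) ∧ f 0 = 1) ∧
    -- (3) f satisfies the functional equation, with coefficients that are
    -- automorphisms of Y whose squares sum to 1
    (ratSMul ((p : ℚ) / (q : ℚ) ^ a) Y = (Y : Set ℚ) ∧
      ratSMul (1 / (q : ℚ) ^ a) Y = (Y : Set ℚ) ∧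
      (b : ℚ) * ((p : ℚ) / (q : ℚ) ^ a) ^ 2 + (1 / (q : ℚ) ^ a) ^ 2 = 1 ∧
      ∀ y : Y, f y = (f ⟨((p : ℚ) / (q : ℚ) ^ a) * (y : ℚ), hm1 y⟩) ^ b *
        f ⟨(1 / (q : ℚ) ^ a) * (y : ℚ), hm2 y⟩) ∧
    -- (4) f is not of Gauss–Haar form
    ¬ ∃ (σ : ℝ), 0 ≤ σ ∧ ∃ (E : AddSubgroup ℚ), E ≤ Y ∧
        ∃ (χ : AddChar Y Circle),
          (∀ y : Y, (y : ℚ) ∈ E →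
            ((f y : ℂ)) = (χ y : ℂ) * Complex.exp (-(σ : ℂ) * ((y : ℚ) : ℂ) ^ 2)) ∧
          (∀ y : Y, (y : ℚ) ∉ E → f y = 0) := by
  haveI hpf : Fact p.Prime := ⟨hp⟩
  have hp0 : (p : ℚ) ≠ 0 := by
    have := hp.one_lt; positivity
  have hq0 : (q : ℚ) ≠ 0 := by
    have := hq.one_lt; positivity
  have hqa0 : (q : ℚ) ^ a ≠ 0 := pow_ne_zero _ hq0
  -- membership characterizations
  have memH_iff : ∀ y : ℚ, y ∈ H ↔ y ∈ Y ∧ (y = 0 ∨ 0 ≤ padicValRat p y) := by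
    intro y
    rw [hH]
    exact and_congr_right fun _ => formH_iff y
  have memH1_iff : ∀ y : ℚ, y ∈ H₁ ↔ y ∈ Y ∧ (y ≠ 0 ∧ padicValRat p y = -1) := by
    intro y
    rw [hH₁]
    exact and_congr_right fun _ => formH1_iff y
  -- valuation of q^a
  have hndvd : ¬ p ∣ q := by
    intro hd
    rcases hq.eq_one_or_self_of_dvd p hd with h | h
    · exact absurd h hp.one_lt.ne'
    · omega
  have vq : padicValRat p ((q : ℚ) ^ a) = 0 := by
    rw [padicValRat.pow (q : ℚ), padicValRat.of_nat, padicValNat.eq_zero_of_not_dvd hndvd]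
    simp
  have vA : padicValRat p ((p : ℚ) / (q : ℚ) ^ a) = 1 := by
    rw [padicValRat.div hp0 hqa0, vq, padicValRat.of_nat, padicValNat_self]
    simp
  have vB : padicValRat p (1 / (q : ℚ) ^ a) = 0 := by
    rw [padicValRat.div one_ne_zero hqa0, vq, padicValRat.one]
    norm_num
  have hA0 : (p : ℚ) / (q : ℚ) ^ a ≠ 0 := div_ne_zero hp0 hqa0
  have hB0 : (1 : ℚ) / (q : ℚ) ^ a ≠ 0 := div_ne_zero one_ne_zero hqa0
  refine ⟨?_, ⟨?_, ?_⟩, ⟨?_, ?_, ?_, ?_⟩, ?_⟩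
  -- (1) L
  · refine ⟨valSubgroup p Y (-1), ?_, fun y hy => hy.1⟩
    ext y
    simp only [SetLike.mem_coe, mem_valSubgroup_iff, Set.mem_union, memH_iff, memH1_iff]
    constructor
    · rintro ⟨hyY, h0 | hv⟩
      · exact Or.inl ⟨hyY, Or.inl h0⟩
      · rcases eq_or_ne y 0 with rfl | hy0
        · exact Or.inl ⟨hyY, Or.inl rfl⟩
        · rcases eq_or_lt_of_le hv with hv1 | hv1
          · exact Or.inr ⟨hyY, hy0, hv1.symm⟩
          · exact Or.inl ⟨hyY, Or.inr (by omega)⟩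
    · rintro (⟨hyY, h0 | hv⟩ | ⟨hyY, _, hv⟩)
      · exact ⟨hyY, Or.inl h0⟩
      · exact ⟨hyY, Or.inr (by omega)⟩
      · exact ⟨hyY, Or.inr (by omega)⟩
  -- (2) positive definite
  · refine isPD_two_indicators ((valSubgroup p Y 0).comap Y.subtype)
      ((valSubgroup p Y (-1)).comap Y.subtype) (1 - c) c (by linarith) hc0.le _ ?_
    intro g
    have hgY : (g : ℚ) ∈ Y := g.2
    have hmem : ∀ k : ℤ, g ∈ (valSubgroup p Y k).comap Y.subtype ↔
        ((g : ℚ) = 0 ∨ k ≤ padicValRat p (g : ℚ)) := by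
      intro k
      rw [AddSubgroup.mem_comap]
      exact ⟨fun h => h.2, fun h => ⟨hgY, h⟩⟩
    by_cases h1 : (g : ℚ) = 0 ∨ 0 ≤ padicValRat p (g : ℚ)
    · have : f g = 1 := hf1 g ((memH_iff _).mpr ⟨hgY, h1⟩)
      rw [this, if_pos ((hmem 0).mpr h1),
        if_pos ((hmem (-1)).mpr (by rcases h1 with h | h; exacts [Or.inl h, Or.inr (by omega)]))]
      push_cast
      ring
    · push_neg at h1
      obtain ⟨hg0, hgv⟩ := h1
      by_cases h2 : padicValRat p (g : ℚ) = -1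
      · have : f g = c := hfc g ((memH1_iff _).mpr ⟨hgY, hg0, h2⟩)
        rw [this, if_neg (fun hh => by
            rcases (hmem 0).mp hh with h | h
            · exact hg0 h
            · omega),
          if_pos ((hmem (-1)).mpr (Or.inr (by omega)))]
        push_cast
        ring
      · have : f g = 0 := by
          apply hf0
          rw [Set.mem_union, memH_iff, memH1_iff]
          push_neg
          exact ⟨fun _ => ⟨hg0, by omega⟩, fun _ _ => h2⟩
        rw [this, if_neg (fun hh => by
            rcases (hmem 0).mp hh with h | h
            · exact hg0 h
            · omega),
          if_neg (fun hh => by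
            rcases (hmem (-1)).mp hh with h | h
            exacts [hg0 h, h2 (by omega)])]
        push_cast
        ring
  -- f 0 = 1
  · apply hf1
    rw [memH_iff]
    exact ⟨by simpa using Y.zero_mem, Or.inl (by simp)⟩
  -- (3a)
  · have r1 : ratSMul ((q : ℚ) ^ a) Y = (Y : Set ℚ) := ratSMul_pow _ _ hqY a
    have r2 : ratSMul (((q : ℚ) ^ a)⁻¹) Y = (Y : Set ℚ) := ratSMul_inv _ hqa0 _ r1
    rw [div_eq_mul_inv]
    exact ratSMul_mul _ _ _ r2 hpY
  -- (3b)
  · have r1 : ratSMul ((q : ℚ) ^ a) Y = (Y : Set ℚ) := ratSMul_pow _ _ hqY a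
    have r2 : ratSMul (((q : ℚ) ^ a)⁻¹) Y = (Y : Set ℚ) := ratSMul_inv _ hqa0 _ r1
    rw [one_div]
    exact r2
  -- (3c)
  · have hcast : ((q : ℚ)) ^ (2 * a) = (p : ℚ) ^ 2 * (b : ℚ) + 1 := by exact_mod_cast hab
    have hqexp : ((q : ℚ) ^ a) ^ 2 = (q : ℚ) ^ (2 * a) := by
      rw [← pow_mul, mul_comm]
    field_simp
    rw [← pow_mul, Nat.mul_comm a 2]
    first
    | linear_combination (-2 : ℚ) * hcast
    | linear_combination (2 : ℚ) * hcast
    | linear_combination hcast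
    | linear_combination -hcast
  -- (3d) functional equation
  · intro y
    set x : ℚ := (y : ℚ) with hx
    have hyY : x ∈ Y := y.2
    set A : ℚ := (p : ℚ) / (q : ℚ) ^ a with hAdef
    set B : ℚ := 1 / (q : ℚ) ^ a with hBdef
    rcases eq_or_ne x 0 with hx0 | hx0
    · have e1 : f y = 1 := hf1 y ((memH_iff _).mpr ⟨hyY, Or.inl hx0⟩)
      have e2 : f ⟨A * x, hm1 y⟩ = 1 := hf1 _ ((memH_iff _).mpr ⟨hm1 y, Or.inl (by
        show A * x = 0; rw [hx0, mul_zero])⟩)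
      have e3 : f ⟨B * x, hm2 y⟩ = 1 := hf1 _ ((memH_iff _).mpr ⟨hm2 y, Or.inl (by
        show B * x = 0; rw [hx0, mul_zero])⟩)
      rw [e1, e2, e3]
      simp
    · have vAx : padicValRat p (A * x) = 1 + padicValRat p x := by
        rw [padicValRat.mul hA0 hx0, vA]
      have vBx : padicValRat p (B * x) = padicValRat p x := by
        rw [padicValRat.mul hB0 hx0, vB, zero_add]
      have hAx0 : A * x ≠ 0 := mul_ne_zero hA0 hx0
      have hBx0 : B * x ≠ 0 := mul_ne_zero hB0 hx0
      by_cases h1 : 0 ≤ padicValRat p x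
      · have e1 : f y = 1 := hf1 y ((memH_iff _).mpr ⟨hyY, Or.inr h1⟩)
        have e2 : f ⟨A * x, hm1 y⟩ = 1 := hf1 _ ((memH_iff _).mpr ⟨hm1 y, Or.inr (by
          show (0:ℤ) ≤ padicValRat p (A * x); omega)⟩)
        have e3 : f ⟨B * x, hm2 y⟩ = 1 := hf1 _ ((memH_iff _).mpr ⟨hm2 y, Or.inr (by
          show (0:ℤ) ≤ padicValRat p (B * x); omega)⟩)
        rw [e1, e2, e3]
        simp
      · by_cases h2 : padicValRat p x = -1
        · have e1 : f y = c := hfc y ((memH1_iff _).mpr ⟨hyY, hx0, h2⟩)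
          have e2 : f ⟨A * x, hm1 y⟩ = 1 := hf1 _ ((memH_iff _).mpr ⟨hm1 y, Or.inr (by
            show (0:ℤ) ≤ padicValRat p (A * x); omega)⟩)
          have e3 : f ⟨B * x, hm2 y⟩ = c := hfc _ ((memH1_iff _).mpr ⟨hm2 y, hBx0, by
            show padicValRat p (B * x) = -1; omega⟩)
          rw [e1, e2, e3]
          simp
        · have e1 : f y = 0 := by
            apply hf0
            rw [Set.mem_union, memH_iff, memH1_iff]
            push_neg
            exact ⟨fun _ => ⟨hx0, not_le.mp h1⟩, fun _ _ => h2⟩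
          have e3 : f ⟨B * x, hm2 y⟩ = 0 := by
            apply hf0
            rw [Set.mem_union, memH_iff, memH1_iff]
            push_neg
            refine ⟨fun _ => ⟨hBx0, ?_⟩, fun _ _ => ?_⟩
            · show padicValRat p (B * x) < 0; omega
            · show padicValRat p (B * x) ≠ -1; omega
          rw [e1, e3, mul_zero]
  -- (4)
  · rintro ⟨σ, hσ, E, hEY, χ, hχ, hχ0⟩
    -- find an element of valuation -1
    have hdivp : ∀ z : ℚ, z ∈ Y → ∀ k : ℕ, ∃ w, w ∈ Y ∧ z = (p : ℚ) ^ k * w := by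
      intro z hz k
      induction k with
      | zero => exact ⟨z, hz, by simp⟩
      | succ k ih =>
        obtain ⟨w, hwY, hzw⟩ := ih
        have : w ∈ ratSMul (p : ℚ) Y := by rw [hpY]; exact hwY
        obtain ⟨u, huY, huw⟩ := this
        exact ⟨u, huY, by rw [hzw, ← huw, pow_succ]; ring⟩
    have hmulp : ∀ z : ℚ, z ∈ Y → ∀ k : ℕ, (p : ℚ) ^ k * z ∈ Y := by
      intro z hz k
      have h := AddSubgroup.nsmul_mem Y hz (p ^ k)
      rwa [nsmul_eq_mul, Nat.cast_pow] at h
    obtain ⟨z, hzY, hz0⟩ : ∃ z, z ∈ Y ∧ z ≠ 0 := by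
      by_contra h
      push_neg at h
      apply hY
      ext w
      simp only [AddSubgroup.mem_bot]
      exact ⟨fun hw => h w hw, by rintro rfl; exact Y.zero_mem⟩
    set v : ℤ := padicValRat p z with hv
    obtain ⟨w, hwY, hzw⟩ := hdivp z hzY (v + 1).toNat
    have hw0 : w ≠ 0 := by
      rintro rfl
      rw [mul_zero] at hzw
      exact hz0 hzw
    have hppow0 : ∀ k : ℕ, (p : ℚ) ^ k ≠ 0 := fun k => pow_ne_zero _ hp0
    have vw : padicValRat p w = v - (v + 1).toNat := by
      have := hzw ▸ hv
      rw [hzw, padicValRat.mul (hppow0 _) hw0, padicValRat.pow (p : ℚ),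
        padicValRat.self hp.one_lt] at hv
      omega
    set y₁ : ℚ := (p : ℚ) ^ (-1 - v).toNat * w with hy₁
    have hy₁Y : y₁ ∈ Y := hmulp w hwY _
    have hy₁0 : y₁ ≠ 0 := mul_ne_zero (hppow0 _) hw0
    have vy₁ : padicValRat p y₁ = -1 := by
      rw [hy₁, padicValRat.mul (hppow0 _) hw0, padicValRat.pow (p : ℚ),
        padicValRat.self hp.one_lt, vw]
      omega
    have hpy₁Y : (p : ℚ) * y₁ ∈ Y := by simpa using hmulp y₁ hy₁Y 1
    have hpy₁0 : (p : ℚ) * y₁ ≠ 0 := mul_ne_zero hp0 hy₁0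
    have vpy₁ : padicValRat p ((p : ℚ) * y₁) = 0 := by
      rw [padicValRat.mul hp0 hy₁0, padicValRat.self hp.one_lt, vy₁]
      norm_num
    set yel : Y := ⟨y₁, hy₁Y⟩ with hyel
    set pel : Y := ⟨(p : ℚ) * y₁, hpy₁Y⟩ with hpel
    have hfyel : f yel = c := hfc yel ((memH1_iff _).mpr ⟨hy₁Y, hy₁0, vy₁⟩)
    have hfpel : f pel = 1 := hf1 pel ((memH_iff _).mpr ⟨hpy₁Y, Or.inr (by
      show (0:ℤ) ≤ padicValRat p ((p : ℚ) * y₁); omega)⟩)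
    have hyelE : (yel : ℚ) ∈ E := by
      by_contra h
      have := hχ0 yel h
      rw [hfyel] at this
      exact hc0.ne' this
    have hpelE : (pel : ℚ) ∈ E := by
      by_contra h
      have := hχ0 pel h
      rw [hfpel] at this
      norm_num at this
    have eq1 := hχ yel hyelE
    have eq2 := hχ pel hpelE
    rw [hfyel] at eq1
    rw [hfpel] at eq2
    -- take absolute values
    have habs : ∀ (u : Y) (t : ℝ), ((t : ℝ) : ℂ) = (χ u : ℂ) *
        Complex.exp (-(σ : ℂ) * (((u : ℚ) : ℂ)) ^ 2) →
        |t| = Real.exp (-(σ * (((u : ℚ) : ℝ)) ^ 2)) := by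
      intro u t h
      have h2 : -(σ : ℂ) * (((u : ℚ) : ℂ)) ^ 2 = ((-(σ * (((u : ℚ) : ℝ)) ^ 2) : ℝ) : ℂ) := by
        push_cast
        ring
      have := congrArg (‖·‖) h
      rwa [norm_mul, Circle.norm_coe, one_mul, h2, ← Complex.ofReal_exp,
        Complex.norm_real, Complex.norm_real, Real.norm_eq_abs, Real.norm_eq_abs,
        abs_of_pos (Real.exp_pos _)] at this
    have key1 : |c| = Real.exp (-(σ * ((y₁ : ℝ)) ^ 2)) := by
      have := habs yel c (by exact_mod_cast eq1)
      simpa using this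
    have key2 : |(1 : ℝ)| = Real.exp (-(σ * (((p : ℚ) * y₁ : ℚ) : ℝ) ^ 2)) := by
      have := habs pel 1 (by exact_mod_cast eq2)
      simpa [hpel] using this
    have hxr0 : ((((p : ℚ) * y₁ : ℚ)) : ℝ) ≠ 0 := by
      rw [Rat.cast_ne_zero]
      exact hpy₁0
    have h0 : σ * ((((p : ℚ) * y₁ : ℚ)) : ℝ) ^ 2 = 0 := by
      rw [abs_one] at key2
      have h2 : -(σ * ((((p : ℚ) * y₁ : ℚ)) : ℝ) ^ 2) = 0 :=
        Real.exp_eq_exp.mp (key2.symm.trans Real.exp_zero.symm)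
      linarith
    have hσ0 : σ = 0 := by
      have hne := pow_ne_zero 2 hxr0
      rcases mul_eq_zero.mp h0 with h | h
      · exact h
      · exact absurd h hne
    rw [hσ0, abs_of_pos hc0] at key1
    simp only [zero_mul, neg_zero, Real.exp_zero] at key1
    linarith
end

section
/- Let μ be a Borel probability measure on the circle group 𝕋 = ℝ/ℤ, let n ≥ 2, and let ε_1, …, ε_n ∈ {−1, 1}. If the pushforward of the product measure μ^{⊗n} under the map (x_1, …, x_n) ↦ ε_1x_1 + ⋯ + ε_nx_n equals μ, then there exist an element x ∈ 𝕋 and a closed subgroup K of 𝕋 such that μ is the translate by x of the Haar probability measure of K (viewed as a measure on 𝕋 supported on the coset x + K). -/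
open MeasureTheory
open scoped BigOperators

noncomputable section PolyaAux

namespace PolyaCircleAux

open Complex BoundedContinuousFunction

local notation "𝕋" => AddCircle (1 : ℝ)

instance : Fact ((0:ℝ) < 1) := ⟨one_pos⟩

lemma cm_integrable {E : Type*} [NormedAddCommGroup E] (μ : Measure 𝕋) [IsFiniteMeasure μ]
    (f : C(𝕋, E)) : Integrable f μ :=
  f.continuous.integrable_of_hasCompactSupport (IsClosed.isCompact (isClosed_tsupport _))

lemma continuous_int (μ : Measure 𝕋) [IsFiniteMeasure μ] :
    Continuous fun f : C(𝕋, ℂ) => ∫ x, f x ∂μ := by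
  refine (LipschitzWith.of_dist_le_mul (K := (μ Set.univ).toNNReal)
    (fun f g => ?_)).continuous
  rw [dist_eq_norm, ← integral_sub (cm_integrable μ f) (cm_integrable μ g)]
  have hb : ∀ᵐ x ∂μ, ‖f x - g x‖ ≤ ‖f - g‖ :=
    Filter.Eventually.of_forall fun x => by
      simpa using ContinuousMap.norm_coe_le_norm (f - g) x
  calc ‖∫ x, (f x - g x) ∂μ‖ ≤ ‖f - g‖ * (μ Set.univ).toReal :=
        norm_integral_le_of_norm_le_const hb
    _ = (μ Set.univ).toNNReal * dist f g := by
        rw [dist_eq_norm, ENNReal.coe_toNNReal_eq_toReal]; ring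

/-- Two probability measures on the circle with the same Fourier coefficients agree. -/
lemma ext_fourier (μ ν : Measure 𝕋) [IsProbabilityMeasure μ] [IsProbabilityMeasure ν]
    (h : ∀ m : ℤ, ∫ x, fourier m x ∂μ = ∫ x, fourier m x ∂ν) : μ = ν := by
  have hall : ∀ f : C(𝕋, ℂ), ∫ x, f x ∂μ = ∫ x, f x ∂ν := by
    have hclosed : IsClosed {f : C(𝕋, ℂ) | ∫ x, f x ∂μ = ∫ x, f x ∂ν} :=
      isClosed_eq (continuous_int μ) (continuous_int ν)
    have hsub : (Submodule.span ℂ (Set.range (@fourier 1)) : Set C(𝕋, ℂ)) ⊆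
        {f : C(𝕋, ℂ) | ∫ x, f x ∂μ = ∫ x, f x ∂ν} := by
      intro f hf
      induction hf using Submodule.span_induction with
      | mem f hf => obtain ⟨m, rfl⟩ := hf; exact h m
      | zero => simp
      | add f g _ _ hf hg =>
          simp only [Set.mem_setOf_eq, ContinuousMap.add_apply] at *
          rw [integral_add (cm_integrable μ f) (cm_integrable μ g),
            integral_add (cm_integrable ν f) (cm_integrable ν g), hf, hg]
      | smul c f _ hf =>
          simp only [Set.mem_setOf_eq, ContinuousMap.smul_apply] at *
          rw [integral_smul, integral_smul, hf]
    intro f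
    have hf : f ∈ closure (Submodule.span ℂ (Set.range (@fourier 1)) : Set C(𝕋, ℂ)) := by
      have : f ∈ (Submodule.span ℂ (Set.range (@fourier 1))).topologicalClosure := by
        rw [span_fourier_closure_eq_top]; trivial
      exact this
    exact closure_minimal hsub hclosed hf
  refine ext_of_forall_lintegral_eq_of_IsFiniteMeasure fun f => ?_
  have hc : Continuous fun x : 𝕋 => ((f x : ℝ) : ℂ) :=
    Complex.continuous_ofReal.comp (NNReal.continuous_coe.comp f.continuous)
  have key := hall ⟨fun x => ((f x : ℝ) : ℂ), hc⟩
  simp only [ContinuousMap.coe_mk] at key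
  have hof1 : ∫ x, ((f x : ℝ) : ℂ) ∂μ = ((∫ x, (f x : ℝ) ∂μ : ℝ) : ℂ) := integral_ofReal
  have hof2 : ∫ x, ((f x : ℝ) : ℂ) ∂ν = ((∫ x, (f x : ℝ) ∂ν : ℝ) : ℂ) := integral_ofReal
  rw [hof1, hof2] at key
  have hre : ∫ x, (f x : ℝ) ∂μ = ∫ x, (f x : ℝ) ∂ν := by exact_mod_cast key
  have hl1 : ∫⁻ x, f x ∂μ = ENNReal.ofReal (∫ x, (f x : ℝ) ∂μ) :=
    lintegral_coe_eq_integral (fun x => f x) (f.integrable_of_nnreal (μ := μ))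
  have hl2 : ∫⁻ x, f x ∂ν = ENNReal.ofReal (∫ x, (f x : ℝ) ∂ν) :=
    lintegral_coe_eq_integral (fun x => f x) (f.integrable_of_nnreal (μ := ν))
  rw [hl1, hl2, hre]

lemma fourier_char_add (m : ℤ) (a z : 𝕋) :
    (fourier m (a + z) : ℂ) = fourier m a * fourier m z := by
  simp only [fourier_apply, smul_add, AddCircle.toCircle_add, Circle.coe_mul]

lemma fourier_at_zero (m : ℤ) : (fourier m (0 : 𝕋) : ℂ) = 1 := by
  simp only [fourier_apply, smul_zero, AddCircle.toCircle_zero, Circle.coe_one]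

lemma fourier_sum {ι : Type*} (s : Finset ι) (m : ℤ) (y : ι → 𝕋) :
    (fourier m (∑ j ∈ s, y j) : ℂ) = ∏ j ∈ s, fourier m (y j) := by
  classical
  induction s using Finset.cons_induction with
  | empty => simpa using fourier_at_zero m
  | cons a s ha ih => rw [Finset.sum_cons, Finset.prod_cons, fourier_char_add, ih]

lemma norm_fourier (m : ℤ) (x : 𝕋) : ‖(fourier m x : ℂ)‖ = 1 := by
  simp [Circle.norm_coe]

lemma integral_fourier_map_add (μ : Measure 𝕋) [IsProbabilityMeasure μ] (a : 𝕋) (m : ℤ) :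
    ∫ x, fourier m x ∂(Measure.map (fun z => a + z) μ)
      = fourier m a * ∫ x, fourier m x ∂μ := by
  rw [integral_map (measurable_const_add a).aemeasurable
    ((map_continuous (fourier m)).aestronglyMeasurable)]
  simp_rw [fourier_char_add m a]
  rw [integral_const_mul]

/-- Equality case: if the Fourier coefficient has modulus one, the character is a.e. constant. -/
lemma ae_const_of_norm_eq_one (μ : Measure 𝕋) [IsProbabilityMeasure μ] (m : ℤ)
    (h : ‖∫ x, fourier m x ∂μ‖ = 1) :
    ∀ᵐ x ∂μ, (fourier m x : ℂ) = ∫ x, fourier m x ∂μ := by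
  set c : ℂ := ∫ x, fourier m x ∂μ with hc
  have h1 : ∀ x : 𝕋, (fourier m x : ℂ) * (starRingEnd ℂ) (fourier m x) = 1 := fun x => by
    simp [Complex.mul_conj, Complex.normSq_eq_norm_sq, Circle.norm_coe]
  have hFc : Continuous fun x : 𝕋 => (fourier m x : ℂ) := map_continuous (fourier m)
  have hintf : Integrable (fun x => (fourier m x : ℂ)) μ := cm_integrable μ (fourier m)
  have hintc : Integrable (fun x => (starRingEnd ℂ) (fourier m x : ℂ)) μ := by
    simpa only [← fourier_neg] using cm_integrable μ (fourier (-m))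
  have hIc : ∫ x, (starRingEnd ℂ) (fourier m x : ℂ) ∂μ = (starRingEnd ℂ) c := by
    rw [integral_conj]
  have hcc : c * (starRingEnd ℂ) c = 1 := by
    rw [Complex.mul_conj, Complex.normSq_eq_norm_sq, h]
    norm_num
  have hI : ∫ x, ((fourier m x : ℂ) - c) * (starRingEnd ℂ) ((fourier m x : ℂ) - c) ∂μ
      = 1 - c * (starRingEnd ℂ) c := by
    have hpt : ∀ x : 𝕋, ((fourier m x : ℂ) - c) * (starRingEnd ℂ) ((fourier m x : ℂ) - c)
        = (1 + c * (starRingEnd ℂ) c)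
          - ((starRingEnd ℂ) c * fourier m x + c * (starRingEnd ℂ) (fourier m x)) := by
      intro x
      rw [map_sub]
      linear_combination h1 x
    simp_rw [hpt]
    have hint3 : Integrable (fun x : 𝕋 =>
        (starRingEnd ℂ) c * fourier m x + c * (starRingEnd ℂ) (fourier m x)) μ :=
      (hintf.const_mul _).add (hintc.const_mul _)
    rw [integral_sub (integrable_const _) hint3,
      integral_add (hintf.const_mul _) (hintc.const_mul _), integral_const,
      integral_const_mul, integral_const_mul, hIc, ← hc]
    simp only [measure_univ, ENNReal.toReal_one, probReal_univ, one_smul]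
    ring
  have hcont : Continuous fun x : 𝕋 =>
      ((fourier m x : ℂ) - c) * (starRingEnd ℂ) ((fourier m x : ℂ) - c) :=
    ((hFc.sub continuous_const).mul (continuous_star.comp (hFc.sub continuous_const)))
  have hnn : (0 : 𝕋 → ℝ) ≤ fun x => ‖(fourier m x : ℂ) - c‖ ^ 2 := fun x => by positivity
  have hint2 : Integrable (fun x => ‖(fourier m x : ℂ) - c‖ ^ 2) μ := by
    have hcont2 : Continuous fun x : 𝕋 => ‖(fourier m x : ℂ) - c‖ ^ 2 :=
      ((hFc.sub continuous_const).norm).pow 2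
    exact cm_integrable μ (⟨fun x => ‖(fourier m x : ℂ) - c‖ ^ 2, hcont2⟩ : C(𝕋, ℝ))
  have hzero : ∫ x, ‖(fourier m x : ℂ) - c‖ ^ 2 ∂μ = 0 := by
    have hre : ∀ x : 𝕋, ((‖(fourier m x : ℂ) - c‖ ^ 2 : ℝ) : ℂ)
        = ((fourier m x : ℂ) - c) * (starRingEnd ℂ) ((fourier m x : ℂ) - c) := by
      intro x
      rw [Complex.mul_conj]
      norm_cast
      simp [Complex.normSq_eq_norm_sq]
    have h0 : ∫ x, ((‖(fourier m x : ℂ) - c‖ ^ 2 : ℝ) : ℂ) ∂μ = 0 := by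
      simp_rw [hre]
      rw [hI, hcc]
      ring
    have hof : ∫ x, ((‖(fourier m x : ℂ) - c‖ ^ 2 : ℝ) : ℂ) ∂μ
        = ((∫ x, ‖(fourier m x : ℂ) - c‖ ^ 2 ∂μ : ℝ) : ℂ) := integral_ofReal
    rw [hof] at h0
    exact_mod_cast h0
  have hae := (integral_eq_zero_iff_of_nonneg hnn hint2).mp hzero
  filter_upwards [hae] with x hx
  have hx0 : ‖(fourier m x : ℂ) - c‖ = 0 := by
    have hx' : ‖(fourier m x : ℂ) - c‖ ^ 2 = 0 := hx
    nlinarith [norm_nonneg ((fourier m x : ℂ) - c)]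
  rwa [norm_eq_zero, sub_eq_zero] at hx0

end PolyaCircleAux

end PolyaAux

open PolyaCircleAux

/-- The generalized Pólya theorem on the circle group `𝕋 = ℝ/ℤ` (Remark 2.13): if `μ` is a
probability measure on `𝕋` and `ξ₁` and `ε₁ξ₁ + ⋯ + εₙξₙ` (with `εⱼ = ±1`) are
identically distributed for i.i.d. `ξⱼ` with distribution `μ`, then `μ` is a shift of the
Haar probability measure of a closed (hence compact) subgroup `K` of `𝕋`. -/
theorem generalized_polya_circle
    (μ : Measure (AddCircle (1 : ℝ))) [IsProbabilityMeasure μ]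
    (n : ℕ) (hn : 2 ≤ n) (ε : Fin n → ℤ) (hε : ∀ j, ε j = 1 ∨ ε j = -1)
    (heq : Measure.map (fun x : Fin n → AddCircle (1 : ℝ) => ∑ j, ε j • x j)
      (Measure.pi fun _ : Fin n => μ) = μ) :
    ∃ (x : AddCircle (1 : ℝ)) (K : AddSubgroup (AddCircle (1 : ℝ))),
      IsClosed (K : Set (AddCircle (1 : ℝ))) ∧
      ∃ ν : Measure (AddCircle (1 : ℝ)), IsProbabilityMeasure ν ∧
        ν (K : Set (AddCircle (1 : ℝ))) = 1 ∧
        (∀ k ∈ K, Measure.map (fun z => k + z) ν = ν) ∧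
        μ = Measure.map (fun z => x + z) ν := by
  classical
  set F : ℤ → ℂ := fun m => ∫ x, fourier m x ∂μ with hF
  -- the multiplicative relation among Fourier coefficients
  have hsum_meas : Measurable fun x : Fin n → AddCircle (1:ℝ) => ∑ j, ε j • x j :=
    (continuous_finset_sum _ fun j _ =>
      (continuous_zsmul (ε j)).comp (continuous_apply j)).measurable
  have hprod : ∀ m : ℤ, F m = ∏ j, F (m * ε j) := by
    intro m
    have h1 : F m = ∫ x, fourier m x
        ∂(Measure.map (fun x : Fin n → AddCircle (1:ℝ) => ∑ j, ε j • x j)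
          (Measure.pi fun _ : Fin n => μ)) := by rw [heq]
    rw [h1, integral_map hsum_meas.aemeasurable
      ((map_continuous (fourier m)).aestronglyMeasurable)]
    have h2 : ∀ x : Fin n → AddCircle (1:ℝ),
        (fourier m (∑ j, ε j • x j) : ℂ) = ∏ j, (fourier (m * ε j) (x j) : ℂ) := by
      intro x
      rw [fourier_sum]
      refine Finset.prod_congr rfl fun j _ => ?_
      rw [fourier_apply, fourier_apply, smul_smul]
    simp_rw [h2]
    letI : MeasureSpace (AddCircle (1:ℝ)) := ⟨μ⟩
    haveI : SigmaFinite (volume : Measure (AddCircle (1:ℝ))) := inferInstanceAs (SigmaFinite μ)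
    exact integral_fintype_prod_eq_prod (𝕜 := ℂ) (ι := Fin n)
      (E := fun _ : Fin n => AddCircle (1:ℝ)) fun j y => (fourier (m * ε j) y : ℂ)
  have hFneg : ∀ m : ℤ, F (-m) = (starRingEnd ℂ) (F m) := by
    intro m
    show ∫ x, fourier (-m) x ∂μ = _
    simp_rw [fourier_neg]
    rw [integral_conj]
  have hFle : ∀ m : ℤ, ‖F m‖ ≤ 1 := by
    intro m
    have := norm_integral_le_of_norm_le_const (μ := μ) (f := fun x => (fourier m x : ℂ)) (C := 1)
      (Filter.Eventually.of_forall fun x => le_of_eq (norm_fourier m x))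
    simpa [measure_univ, hF] using this
  have hF0 : F 0 = 1 := by
    show ∫ x, fourier 0 x ∂μ = 1
    simp
  have hnorm_eq : ∀ m : ℤ, ‖F m‖ = ‖F m‖ ^ n := by
    intro m
    calc ‖F m‖ = ‖∏ j, F (m * ε j)‖ := by rw [← hprod m]
      _ = ∏ j, ‖F (m * ε j)‖ := norm_prod _ _
      _ = ∏ _j : Fin n, ‖F m‖ := Finset.prod_congr rfl fun j _ => by
          rcases hε j with h1 | h1
          · rw [h1, mul_one]
          · rw [h1, show m * -1 = -m by ring, hFneg, RCLike.norm_conj]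
      _ = ‖F m‖ ^ n := by rw [Finset.prod_const, Finset.card_univ, Fintype.card_fin]
  have h01 : ∀ m : ℤ, F m = 0 ∨ ‖F m‖ = 1 := by
    intro m
    rcases eq_or_lt_of_le (norm_nonneg (F m)) with h0 | h0
    · left; rwa [eq_comm, norm_eq_zero] at h0
    rcases eq_or_lt_of_le (hFle m) with h1 | h1
    · right; exact h1
    exfalso
    have h2 : ‖F m‖ ^ n ≤ ‖F m‖ ^ 2 := pow_le_pow_of_le_one (norm_nonneg _) (hFle m) hn
    nlinarith [hnorm_eq m]
  -- the subgroup of frequencies with unimodular Fourier coefficient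
  let S : AddSubgroup ℤ :=
    { carrier := {m : ℤ | ‖F m‖ = 1}
      zero_mem' := by simp only [Set.mem_setOf_eq, hF0, norm_one]
      add_mem' := by
        intro a b ha hb
        simp only [Set.mem_setOf_eq] at ha hb ⊢
        have hca := ae_const_of_norm_eq_one μ a ha
        have hcb := ae_const_of_norm_eq_one μ b hb
        have hab : ∀ᵐ x ∂μ, (fourier (a + b) x : ℂ) = F a * F b := by
          filter_upwards [hca, hcb] with x h1 h2
          rw [fourier_add, h1, h2]
        have hFab : F (a + b) = F a * F b := by
          show ∫ x, fourier (a + b) x ∂μ = F a * F b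
          rw [integral_congr_ae hab, integral_const]
          simp
        rw [hFab, norm_mul, ha, hb, one_mul]
      neg_mem' := by
        intro a ha
        simp only [Set.mem_setOf_eq] at ha ⊢
        rw [hFneg, RCLike.norm_conj]
        exact ha }
  have hmem : ∀ m : ℤ, m ∈ S ↔ ‖F m‖ = 1 := fun m => Iff.rfl
  obtain ⟨d, hd⟩ := Int.subgroup_cyclic S
  by_cases hd0 : d = 0
  · -- Haar case: μ is the Haar measure of the full circle
    subst hd0
    refine ⟨0, ⊤, by simp, μ, inferInstance, by simp, ?_, ?_⟩
    · intro k _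
      haveI : IsProbabilityMeasure (Measure.map (fun z => k + z) μ) :=
        Measure.isProbabilityMeasure_map (measurable_const_add k).aemeasurable
      refine ext_fourier _ _ fun m => ?_
      rw [integral_fourier_map_add μ k m]
      by_cases hm : m = 0
      · subst hm
        show (fourier 0 k : ℂ) * F 0 = F 0
        simp
      · have hFm : F m = 0 := by
          rcases h01 m with h | h
          · exact h
          · exfalso
            have hmS := (hmem m).mpr h
            rw [hd] at hmS
            obtain ⟨e, he⟩ := AddSubgroup.mem_closure_singleton.mp hmS
            simp only [smul_zero] at he
            exact hm he.symm
        show (fourier m k : ℂ) * F m = F m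
        rw [hFm, mul_zero]
    · have hid : (fun z : AddCircle (1:ℝ) => (0:AddCircle (1:ℝ)) + z) = id :=
        funext fun z => zero_add z
      rw [hid, Measure.map_id]
  · -- discrete case
    have hdS : ‖F d‖ = 1 :=
      (hmem d).mp (by rw [hd]; exact AddSubgroup.subset_closure (Set.mem_singleton d))
    have hae := ae_const_of_norm_eq_one μ d hdS
    obtain ⟨x₀, hx₀⟩ : ∃ x₀ : AddCircle (1:ℝ), (fourier d x₀ : ℂ) = F d := by
      refine ⟨((F d).arg / (2 * Real.pi * d) : ℝ), ?_⟩
      rw [fourier_coe_apply]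
      have habs : ‖F d‖ = 1 := hdS
      have hcexp : Complex.exp ((F d).arg * Complex.I) = F d := by
        conv_rhs => rw [← Complex.norm_mul_exp_arg_mul_I (F d)]
        rw [habs]; simp
      have hπ : (Real.pi : ℂ) ≠ 0 := Complex.ofReal_ne_zero.mpr Real.pi_ne_zero
      have hdC : (d : ℂ) ≠ 0 := Int.cast_ne_zero.mpr hd0
      convert hcexp using 2
      push_cast
      field_simp
    let K : AddSubgroup (AddCircle (1:ℝ)) :=
      { carrier := {z : AddCircle (1:ℝ) | d • z = 0}
        zero_mem' := smul_zero d
        add_mem' := by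
          intro a b ha hb
          simp only [Set.mem_setOf_eq] at ha hb ⊢
          rw [smul_add, ha, hb, add_zero]
        neg_mem' := by
          intro a ha
          simp only [Set.mem_setOf_eq] at ha ⊢
          rw [smul_neg, ha, neg_zero] }
    have hKclosed : IsClosed (K : Set (AddCircle (1:ℝ))) :=
      IsClosed.preimage (continuous_zsmul d) isClosed_singleton
    set ν : Measure (AddCircle (1:ℝ)) := Measure.map (fun z => -x₀ + z) μ with hν
    haveI hνprob : IsProbabilityMeasure ν :=
      Measure.isProbabilityMeasure_map (measurable_const_add _).aemeasurable
    refine ⟨x₀, K, hKclosed, ν, hνprob, ?_, ?_, ?_⟩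
    · -- ν is supported on K
      have hKmeas : MeasurableSet (K : Set (AddCircle (1:ℝ))) := hKclosed.measurableSet
      rw [hν, Measure.map_apply (measurable_const_add _) hKmeas]
      have hsub : ∀ᵐ z ∂μ, z ∈ (fun z => -x₀ + z) ⁻¹' (K : Set (AddCircle (1:ℝ))) := by
        filter_upwards [hae] with z hz
        show d • (-x₀ + z) = 0
        apply AddCircle.injective_toCircle (one_ne_zero)
        have h1 : AddCircle.toCircle (d • z) = AddCircle.toCircle (d • x₀) := by
          apply Subtype.ext
          show (AddCircle.toCircle (d • z) : ℂ) = (AddCircle.toCircle (d • x₀) : ℂ)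
          rw [← fourier_apply, ← fourier_apply, hz, hx₀]
        have h2 : AddCircle.toCircle (d • (-x₀ + z)) * AddCircle.toCircle (d • x₀)
            = AddCircle.toCircle (d • z) := by
          rw [← AddCircle.toCircle_add]
          congr 1
          rw [smul_add, smul_neg]
          abel
        rw [AddCircle.toCircle_zero]
        refine mul_right_cancel (b := AddCircle.toCircle (d • x₀)) ?_
        rw [h2, h1, one_mul]
      have h0 : μ ((fun z => -x₀ + z) ⁻¹' (K : Set (AddCircle (1:ℝ))))ᶜ = 0 := ae_iff.mp hsub
      exact (measure_congr (ae_eq_univ.mpr h0)).trans measure_univ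
    · -- ν is K-invariant
      intro k hk
      have hk0 : d • k = 0 := hk
      haveI : IsProbabilityMeasure (Measure.map (fun z => k + z) ν) :=
        Measure.isProbabilityMeasure_map (measurable_const_add k).aemeasurable
      refine ext_fourier _ _ fun m => ?_
      rw [integral_fourier_map_add ν k m]
      by_cases hmS : m ∈ S
      · rw [hd] at hmS
        obtain ⟨e, he⟩ := AddSubgroup.mem_closure_singleton.mp hmS
        have hone : (fourier m k : ℂ) = 1 := by
          rw [fourier_apply]
          have hmk : m • k = (0 : AddCircle (1:ℝ)) := by
            rw [← he, smul_eq_mul, mul_smul, hk0, smul_zero]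
          rw [hmk, AddCircle.toCircle_zero, Circle.coe_one]
        rw [hone, one_mul]
      · have hFm : F m = 0 := by
          rcases h01 m with h | h
          · exact h
          · exact absurd ((hmem m).mpr h) hmS
        have hzero : ∫ x, fourier m x ∂ν = 0 := by
          rw [hν, integral_fourier_map_add μ (-x₀) m,
            show (∫ x, fourier m x ∂μ) = F m from rfl, hFm, mul_zero]
        rw [hzero, mul_zero]
    · -- μ is the x₀-translate of ν
      rw [hν, Measure.map_map (measurable_const_add x₀) (measurable_const_add (-x₀))]
      have hid : ((fun z : AddCircle (1:ℝ) => x₀ + z) ∘ fun z => -x₀ + z) = id :=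
        funext fun z => by simp
      rw [hid, Measure.map_id]
end

section
/- Let p be a prime number and let Y be a nontrivial additive subgroup of ℚ with p·Y = Y. Let n ≥ 2, let k_1, …, k_n be positive integers and ε_1, …, ε_n ∈ {−1, 1}, set r_j = ε_j·p^{−k_j}, and assume r_1² + ⋯ + r_n² = 1. Let σ ≥ 0 and let E be a subgroup of Y such that for every y ∈ Y, y ∈ E if and only if p·y ∈ E. Define f : Y → ℝ by f(y) = exp(−σ y²) for y ∈ E and f(y) = 0 for y ∉ E. Then f is a positive definite function on Y with f(0) = 1, and f(y) = ∏_{j=1}^n f(r_j·y) for all y ∈ Y. -/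
open scoped BigOperators

/-- The Gaussian kernel is positive definite. -/
lemma gauss_pd (σ : ℝ) (hσ : 0 ≤ σ) (N : ℕ) (x : Fin N → ℝ) (c : Fin N → ℂ) :
    ∃ t : ℝ, 0 ≤ t ∧
      ∑ i, ∑ j, c i * (starRingEnd ℂ) (c j) * (Real.exp (-σ * (x i - x j) ^ 2) : ℂ) = (t : ℂ) := by
  classical
  set d : Fin N → ℂ := fun i => c i * (Real.exp (-σ * x i ^ 2) : ℂ) with hd
  set S : ℕ → ℂ := fun m => ∑ i, d i * (x i : ℂ) ^ m with hS
  set R : ℕ → ℝ := fun m => (2 * σ) ^ m / m.factorial * Complex.normSq (S m) with hR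
  set a : Fin N → Fin N → ℕ → ℂ := fun i j m =>
    d i * (starRingEnd ℂ) (d j) * (((2 * σ * x i * x j : ℝ) : ℂ) ^ m / m.factorial) with ha
  have hsumm : ∀ (i j : Fin N), Summable (a i j) := by
    intro i j
    exact (NormedSpace.expSeries_div_summable ((2 * σ * x i * x j : ℝ) : ℂ)).mul_left _
  have hterm : ∀ i j, c i * (starRingEnd ℂ) (c j) * (Real.exp (-σ * (x i - x j) ^ 2) : ℂ)
      = ∑' m : ℕ, a i j m := by
    intro i j
    have h1 : Real.exp (-σ * (x i - x j) ^ 2)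
        = Real.exp (-σ * x i ^ 2) * Real.exp (-σ * x j ^ 2) * Real.exp (2 * σ * x i * x j) := by
      rw [← Real.exp_add, ← Real.exp_add]
      ring_nf
    have h2 : ((Real.exp (2 * σ * x i * x j) : ℝ) : ℂ)
        = ∑' m : ℕ, ((2 * σ * x i * x j : ℝ) : ℂ) ^ m / m.factorial := by
      rw [Complex.ofReal_exp, Complex.exp_eq_exp_ℂ, NormedSpace.exp_eq_tsum_div]
    have h3 : c i * (starRingEnd ℂ) (c j) * (Real.exp (-σ * (x i - x j) ^ 2) : ℂ)
        = d i * (starRingEnd ℂ) (d j) * ((Real.exp (2 * σ * x i * x j) : ℝ) : ℂ) := by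
      rw [h1, hd]
      simp only [map_mul, Complex.conj_ofReal]
      push_cast
      ring
    rw [h3, h2, ← tsum_mul_left]
  have hmR : ∀ m : ℕ, (∑ i, ∑ j, a i j m) = ((R m : ℝ) : ℂ) := by
    intro m
    have hconj : (starRingEnd ℂ) (S m) = ∑ j, (starRingEnd ℂ) (d j) * (x j : ℂ) ^ m := by
      rw [hS]
      simp only [map_sum, map_mul, map_pow, Complex.conj_ofReal]
    have step1 : ∑ i, ∑ j, a i j m
        = (((2 * σ : ℝ) : ℂ) ^ m / m.factorial) *
          ((∑ i, d i * (x i : ℂ) ^ m) * (∑ j, (starRingEnd ℂ) (d j) * (x j : ℂ) ^ m)) := by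
      rw [Finset.sum_mul_sum]
      simp only [Finset.mul_sum]
      refine Finset.sum_congr rfl fun i _ => Finset.sum_congr rfl fun j _ => ?_
      rw [ha]
      push_cast
      ring
    have hSm : (∑ i, d i * (x i : ℂ) ^ m) = S m := rfl
    rw [step1, hSm, ← hconj, Complex.mul_conj, hR]
    push_cast
    ring
  refine ⟨∑' m, R m, tsum_nonneg fun m => mul_nonneg (div_nonneg (pow_nonneg (by linarith) m)
    (by positivity)) (Complex.normSq_nonneg _), ?_⟩
  calc ∑ i, ∑ j, c i * (starRingEnd ℂ) (c j) * (Real.exp (-σ * (x i - x j) ^ 2) : ℂ)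
      = ∑ i, ∑ j, ∑' m : ℕ, a i j m :=
        Finset.sum_congr rfl fun i _ => Finset.sum_congr rfl fun j _ => hterm i j
    _ = ∑ i, ∑' m : ℕ, ∑ j, a i j m :=
        Finset.sum_congr rfl fun i _ => (Summable.tsum_finsetSum fun j _ => hsumm i j).symm
    _ = ∑' m : ℕ, ∑ i, ∑ j, a i j m :=
        (Summable.tsum_finsetSum fun i _ => summable_sum fun j _ => hsumm i j).symm
    _ = ∑' m : ℕ, ((R m : ℝ) : ℂ) := tsum_congr hmR
    _ = ((∑' m, R m : ℝ) : ℂ) := (Complex.ofReal_tsum _).symm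

/-- Dual form of the converse statement of Remark 2.9: the Gauss–Haar functions
`f = exp(-σ y²)` on `E`, `f = 0` off `E` (with `E` stable under division by `p`) are
positive definite solutions of the Pólya functional equation with coefficients
`rⱼ = ± p^{-kⱼ}`; hence the class characterized in the main theorem cannot be narrowed. -/
theorem gauss_haar_satisfies_polya_equation
    (p : ℕ) (hp : p.Prime) (Y : AddSubgroup ℚ) (hY : Y ≠ ⊥)
    (hpY : ratSMul (p : ℚ) Y = (Y : Set ℚ))
    (n : ℕ) (hn : 2 ≤ n) (k : Fin n → ℕ) (hk : ∀ j, 0 < k j)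
    (ε : Fin n → ℤ) (hε : ∀ j, ε j = 1 ∨ ε j = -1)
    (r : Fin n → ℚ) (hr : ∀ j, r j = (ε j : ℚ) * (p : ℚ) ^ (-(k j : ℤ)))
    (hsum : ∑ j, (r j) ^ 2 = 1)
    (σ : ℝ) (hσ : 0 ≤ σ)
    (E : AddSubgroup ℚ) (hEY : E ≤ Y)
    (hEp : ∀ y : ℚ, y ∈ Y → (y ∈ E ↔ (p : ℚ) * y ∈ E))
    (f : Y → ℝ)
    (hfE : ∀ y : Y, (y : ℚ) ∈ E → f y = Real.exp (-σ * (((y : ℚ) : ℝ)) ^ 2))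
    (hf0 : ∀ y : Y, (y : ℚ) ∉ E → f y = 0)
    (hmem : ∀ (j : Fin n) (y : Y), r j * (y : ℚ) ∈ Y) :
    IsPositiveDefinite (fun y : Y => (f y : ℂ)) ∧ f 0 = 1 ∧
      ∀ y : Y, f y = ∏ j, f ⟨r j * (y : ℚ), hmem j y⟩ := by
  classical
  have hp0 : (p : ℚ) ≠ 0 := Nat.cast_ne_zero.mpr hp.ne_zero
  -- iterated division stability of `E` inside `Y`
  have hpow : ∀ (m : ℕ) (y : ℚ), y ∈ Y → (y ∈ E ↔ (p : ℚ) ^ m * y ∈ E) := by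
    intro m
    induction m with
    | zero => intro y _; simp
    | succ m ih =>
      intro y hy
      have hym : (p : ℚ) ^ m * y ∈ Y := by
        have h := AddSubgroup.nsmul_mem Y hy (p ^ m)
        have heq : (p ^ m : ℕ) • y = (p : ℚ) ^ m * y := by
          rw [nsmul_eq_mul]; push_cast; ring
        rwa [heq] at h
      rw [ih y hy, hEp _ hym]
      have heq : (p : ℚ) * ((p : ℚ) ^ m * y) = (p : ℚ) ^ (m + 1) * y := by ring
      rw [heq]
  -- membership in `E` is invariant under multiplication by each `r j`
  have hrE : ∀ (j : Fin n) (y : Y), ((y : ℚ) ∈ E ↔ r j * (y : ℚ) ∈ E) := by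
    intro j y
    have h1 := hpow (k j) (r j * (y : ℚ)) (hmem j y)
    have hpk : (p : ℚ) ^ (k j) * (p : ℚ) ^ (-(k j : ℤ)) = 1 := by
      rw [← zpow_natCast, ← zpow_add₀ hp0]; simp
    have h2 : (p : ℚ) ^ (k j) * (r j * (y : ℚ)) = (ε j : ℚ) * (y : ℚ) := by
      rw [hr j]
      calc (p : ℚ) ^ (k j) * ((ε j : ℚ) * (p : ℚ) ^ (-(k j : ℤ)) * (y : ℚ))
          = ((p : ℚ) ^ (k j) * (p : ℚ) ^ (-(k j : ℤ))) * ((ε j : ℚ) * (y : ℚ)) := by ring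
        _ = (ε j : ℚ) * (y : ℚ) := by rw [hpk, one_mul]
    have h3 : ((ε j : ℚ) * (y : ℚ) ∈ E) ↔ (y : ℚ) ∈ E := by
      rcases hε j with h | h <;> simp [h, neg_mem_iff]
    rw [h1, h2, h3]
  refine ⟨?_, ?_, ?_⟩
  · -- positive definiteness
    intro N ys c
    set E' : AddSubgroup Y := E.addSubgroupOf Y with hE'
    set q : Y → Y ⧸ E' := QuotientAddGroup.mk with hq
    set x : Fin N → ℝ := fun i => (((ys i : ℚ) : ℝ)) with hx
    set s : Finset (Y ⧸ E') := Finset.univ.image fun i => q (ys i) with hs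
    set cz : Y ⧸ E' → Fin N → ℂ := fun z i => if q (ys i) = z then c i else 0 with hcz
    have hqiff : ∀ i j, (q (ys i) = q (ys j)) ↔ ((ys i - ys j : Y) : ℚ) ∈ E := by
      intro i j
      rw [hq, QuotientAddGroup.eq_iff_sub_mem, hE', AddSubgroup.mem_addSubgroupOf]
    have hfval : ∀ i j, ((f (ys i - ys j) : ℝ) : ℂ)
        = if q (ys i) = q (ys j) then ((Real.exp (-σ * (x i - x j) ^ 2) : ℝ) : ℂ) else 0 := by
      intro i j
      by_cases h : q (ys i) = q (ys j)
      · rw [if_pos h, hfE _ ((hqiff i j).mp h)]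
        have hxeq : (((ys i - ys j : Y) : ℚ) : ℝ) = x i - x j := by
          rw [hx]; push_cast; ring
        rw [hxeq]
      · rw [if_neg h, hf0 _ fun hc => h ((hqiff i j).mpr hc)]
        simp
    have hexp : ∀ i j, c i * (starRingEnd ℂ) (c j) * ((f (ys i - ys j) : ℝ) : ℂ)
        = ∑ z ∈ s, cz z i * (starRingEnd ℂ) (cz z j)
            * ((Real.exp (-σ * (x i - x j) ^ 2) : ℝ) : ℂ) := by
      intro i j
      by_cases h : q (ys i) = q (ys j)
      · rw [hfval i j, if_pos h]
        rw [Finset.sum_eq_single (q (ys i))]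
        · simp [hcz, h]
        · intro z _ hne
          have h1 : ¬ q (ys i) = z := fun hh => hne hh.symm
          simp [hcz, h1]
        · intro hns
          exact absurd (Finset.mem_image_of_mem _ (Finset.mem_univ i)) hns
      · rw [hfval i j, if_neg h, mul_zero]
        symm
        apply Finset.sum_eq_zero
        intro z _
        by_cases h1 : q (ys i) = z
        · have h2 : ¬ q (ys j) = z := fun hh => h (h1.trans hh.symm)
          simp [hcz, h2]
        · simp [hcz, h1]
    choose t ht0 htq using fun z : Y ⧸ E' => gauss_pd σ hσ N x (cz z)
    refine ⟨∑ z ∈ s, t z, Finset.sum_nonneg fun z _ => ht0 z, ?_⟩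
    calc ∑ i, ∑ j, c i * (starRingEnd ℂ) (c j) * ((f (ys i - ys j) : ℝ) : ℂ)
        = ∑ i, ∑ j, ∑ z ∈ s, cz z i * (starRingEnd ℂ) (cz z j)
            * ((Real.exp (-σ * (x i - x j) ^ 2) : ℝ) : ℂ) :=
          Finset.sum_congr rfl fun i _ => Finset.sum_congr rfl fun j _ => hexp i j
      _ = ∑ i, ∑ z ∈ s, ∑ j, cz z i * (starRingEnd ℂ) (cz z j)
            * ((Real.exp (-σ * (x i - x j) ^ 2) : ℝ) : ℂ) :=
          Finset.sum_congr rfl fun i _ => Finset.sum_comm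
      _ = ∑ z ∈ s, ∑ i, ∑ j, cz z i * (starRingEnd ℂ) (cz z j)
            * ((Real.exp (-σ * (x i - x j) ^ 2) : ℝ) : ℂ) := Finset.sum_comm
      _ = ∑ z ∈ s, ((t z : ℝ) : ℂ) := Finset.sum_congr rfl fun z _ => htq z
      _ = ((∑ z ∈ s, t z : ℝ) : ℂ) := by push_cast; rfl
  · -- f 0 = 1
    have h0 : ((0 : Y) : ℚ) ∈ E := by simp [E.zero_mem]
    rw [hfE 0 h0]
    norm_num
  · -- the Pólya functional equation
    intro y
    by_cases hy : (y : ℚ) ∈ E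
    · rw [hfE y hy]
      have hterm : ∀ j : Fin n, f ⟨r j * (y : ℚ), hmem j y⟩
          = Real.exp (-σ * ((r j : ℝ)) ^ 2 * (((y : ℚ) : ℝ)) ^ 2) := by
        intro j
        rw [hfE _ ((hrE j y).mp hy)]
        push_cast
        ring_nf
      rw [Finset.prod_congr rfl fun j _ => hterm j, ← Real.exp_sum]
      congr 1
      symm
      have hsR : ∑ j, ((r j : ℝ)) ^ 2 = 1 := by
        have h := congrArg (fun q : ℚ => (q : ℝ)) hsum
        push_cast at h
        exact h
      calc ∑ j, -σ * ((r j : ℝ)) ^ 2 * (((y : ℚ) : ℝ)) ^ 2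
          = (-σ * (((y : ℚ) : ℝ)) ^ 2) * ∑ j, ((r j : ℝ)) ^ 2 := by
            rw [Finset.mul_sum]; refine Finset.sum_congr rfl fun j _ => by ring
        _ = -σ * (((y : ℚ) : ℝ)) ^ 2 := by rw [hsR, mul_one]
    · rw [hf0 y hy, eq_comm]
      refine Finset.prod_eq_zero (Finset.mem_univ (⟨0, by omega⟩ : Fin n)) ?_
      exact hf0 _ fun hc => hy ((hrE _ y).mpr hc)
end
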